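/- arXiv:math/0703160 — 9 statements merged into one kernel-verified Lean document; each statement's English description precedes it below -/
import Mathlib

section
/- The number of lattice paths from (0,0) to (νj, 0) using steps (1,1) and (1,−(ν−1)) that never go strictly below the x-axis equals (1/j)·C(νj, j−1), for integers ν ≥ 2 and j ≥ 1. -/
namespace HDP

def Good (l : List ℤ) : Prop := ∀ p : List ℤ, p <+: l → p ≠ [] → 0 < p.sum

lemma good_iff (l : List ℤ) :
    Good l ↔ ∀ i, 0 < i → i ≤ l.length → 0 < (l.take i).sum := by
  constructor
  · intro h i hi hil
    refine h _ (List.take_prefix i l) ?_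
    intro he
    rcases List.take_eq_nil_iff.mp he with h0 | h0
    · omega
    · subst h0; simp at hil; omega
  · intro h p hp hne
    have hlen := hp.length_le
    rw [List.prefix_iff_eq_take.mp hp]
    exact h _ (List.length_pos_iff.mpr hne) hlen

lemma sum_take_drop (l : List ℤ) (k i : ℕ) :
    ((l.drop k).take i).sum = (l.take (k+i)).sum - (l.take k).sum := by
  rw [List.take_add, List.sum_append]; ring

lemma rot_take_sum (l : List ℤ) {k i : ℕ} (hk : k ≤ l.length) (hi : i ≤ l.length) :
    ((l.rotate k).take i).sum
      = (l.take (k+i)).sum - (l.take k).sum + (l.take (i - (l.length - k))).sum := by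
  rw [List.rotate_eq_drop_append_take hk, List.take_append, List.sum_append,
    sum_take_drop, List.length_drop, List.take_take]
  have : min (i - (l.length - k)) k = i - (l.length - k) := by omega
  rw [this]

lemma good_rotate_iff (l : List ℤ) (hs : l.sum = 1) {k : ℕ} (hk : k < l.length) :
    Good (l.rotate k) ↔
      ((∀ i, k < i → i ≤ l.length → (l.take k).sum < (l.take i).sum) ∧
       (∀ m, m ≤ k → (l.take k).sum ≤ (l.take m).sum)) := by
  have hk' : k ≤ l.length := hk.le
  rw [good_iff, List.length_rotate]
  constructor
  · intro h
    have clause1 : ∀ i, k < i → i ≤ l.length → (l.take k).sum < (l.take i).sum := by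
      intro i hki hil
      have h1 : 0 < ((l.rotate k).take (i - k)).sum := h _ (by omega) (by omega)
      rw [rot_take_sum l hk' (by omega)] at h1
      have e1 : k + (i - k) = i := by omega
      have e2 : i - k - (l.length - k) = 0 := by omega
      rw [e1, e2] at h1
      simp at h1
      linarith
    refine ⟨clause1, ?_⟩
    intro m hm
    rcases Nat.eq_zero_or_pos m with rfl | hm0
    · have := clause1 l.length hk le_rfl
      rw [List.take_length] at this
      rw [hs] at this
      simp
      omega
    · have h1 : 0 < ((l.rotate k).take (m + (l.length - k))).sum := h _ (by omega) (by omega)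
      rw [rot_take_sum l hk' (by omega)] at h1
      have e1 : l.take (k + (m + (l.length - k))) = l := List.take_of_length_le (by omega)
      have e2 : m + (l.length - k) - (l.length - k) = m := by omega
      rw [e1, e2, hs] at h1
      omega
  · rintro ⟨c1, c2⟩ i hi hil
    rw [rot_take_sum l hk' hil]
    rcases le_or_gt i (l.length - k) with hle | hgt
    · have e2 : i - (l.length - k) = 0 := by omega
      rw [e2]
      have := c1 (k + i) (by omega) (by omega)
      simp
      linarith
    · have e1 : l.take (k + i) = l := List.take_of_length_le (by omega)
      have := c2 (i - (l.length - k)) (by omega)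
      rw [e1, hs]
      linarith

lemma good_def (l : List ℤ) : Good l ↔ ∀ p : List ℤ, p <+: l → p ≠ [] → 0 < p.sum :=
  Iff.rfl

lemma existsUnique_good_rotate (l : List ℤ) (hs : l.sum = 1) :
    ∃! k, k < l.length ∧ Good (l.rotate k) := by
  have hn : 0 < l.length := by
    rcases l with _ | ⟨x, t⟩
    · simp at hs
    · simp
  set n := l.length with hn'
  set P : ℕ → ℤ := fun i => (l.take i).sum with hP
  classical
  set T : Finset ℕ := (Finset.range n).filter (fun k => ∀ i ∈ Finset.range n, P k ≤ P i) with hT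
  have hTne : T.Nonempty := by
    obtain ⟨k0, hk0, hmin⟩ := Finset.exists_min_image (Finset.range n) P
      ⟨0, Finset.mem_range.mpr hn⟩
    exact ⟨k0, Finset.mem_filter.mpr ⟨hk0, hmin⟩⟩
  set k := T.max' hTne with hkdef
  have hkT : k ∈ T := T.max'_mem hTne
  rw [hT, Finset.mem_filter, Finset.mem_range] at hkT
  obtain ⟨hkn, hkmin⟩ := hkT
  have hPn : P n = 1 := by simp [hP, hn', List.take_length, hs]
  have hgood : Good (l.rotate k) := by
    rw [good_rotate_iff l hs hkn]
    constructor
    · intro i hki hil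
      rcases eq_or_lt_of_le hil with rfl | hilt
      · have h0 : P k ≤ P 0 := hkmin 0 (Finset.mem_range.mpr hn)
        have : P 0 = 0 := by simp [hP]
        show P k < P n
        rw [hPn]
        omega
      · have hle : P k ≤ P i := hkmin i (Finset.mem_range.mpr hilt)
        rcases eq_or_lt_of_le hle with heq | h
        · exfalso
          have hiT : i ∈ T := by
            rw [hT, Finset.mem_filter, Finset.mem_range]
            exact ⟨hilt, fun i' hi' => heq ▸ hkmin i' hi'⟩
          have := Finset.le_max' T i hiT
          omega
        · exact h
    · intro m hm
      exact hkmin m (Finset.mem_range.mpr (by omega))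
  refine ⟨k, ⟨hkn, hgood⟩, ?_⟩
  intro y ⟨hyn, hygood⟩
  by_contra hne
  rw [good_rotate_iff l hs hyn] at hygood
  have hkgood := (good_rotate_iff l hs hkn).mp hgood
  rcases lt_or_gt_of_ne hne with h | h
  · have h1 := hygood.1 k h (by omega)
    have h2 := hkgood.2 y (by omega)
    change P y < P k at h1
    change P k ≤ P y at h2
    omega
  · have h1 := hkgood.1 y h (by omega)
    have h2 := hygood.2 k (by omega)
    change P k < P y at h1
    change P y ≤ P k at h2
    omega

lemma count_ofFn : ∀ (n : ℕ) (f : Fin n → ℤ) (x : ℤ),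
    (List.ofFn f).count x = (Finset.univ.filter (fun i => f i = x)).card
  | 0, f, x => by simp
  | (n+1), f, x => by
    rw [List.ofFn_succ, List.count_cons, count_ofFn n (fun i => f i.succ) x,
      Finset.card_filter, Finset.card_filter, Fin.sum_univ_succ]
    rcases eq_or_ne (f 0) x with h | h <;> simp [h] <;> omega

lemma ncard_S (a b : ℤ) (hab : a ≠ b) (n j : ℕ) :
    Set.ncard {l : List ℤ | l.length = n ∧ (∀ x ∈ l, x = a ∨ x = b) ∧ l.count b = j}
      = n.choose j ∧
    Set.Finite {l : List ℤ | l.length = n ∧ (∀ x ∈ l, x = a ∨ x = b) ∧ l.count b = j} := by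
  classical
  set g : (Fin n → Bool) → List ℤ := fun f => List.ofFn (fun i => if f i then a else b) with hg
  set F : Set (Fin n → Bool) := {f | (Finset.univ.filter (fun i => f i = false)).card = j}
    with hF
  have hcount : ∀ f : Fin n → Bool, (g f).count b
      = (Finset.univ.filter (fun i => f i = false)).card := by
    intro f
    rw [hg]
    simp only []
    rw [count_ofFn]
    congr 1
    apply Finset.filter_congr
    intro i _
    rcases Bool.eq_false_or_eq_true (f i) with h | h <;> simp [h, hab, hab.symm]
  have himg : {l : List ℤ | l.length = n ∧ (∀ x ∈ l, x = a ∨ x = b) ∧ l.count b = j}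
      = g '' F := by
    ext l
    constructor
    · rintro ⟨hlen, hmem, hcnt⟩
      subst hlen
      have hgl : g (fun i => decide (l.get i = a)) = l := by
        simp only [hg]
        conv_rhs => rw [← List.ofFn_get l]
        congr 1
        funext i
        rcases hmem (l[(i : ℕ)]) (List.getElem_mem i.isLt) with h | h <;>
          simp [List.get_eq_getElem, h, hab.symm]
      refine ⟨fun i => decide (l.get i = a), ?_, hgl⟩
      rw [hF, Set.mem_setOf_eq, ← hcount, hgl]
      exact hcnt
    · rintro ⟨f, hf, rfl⟩
      refine ⟨by simp [hg], ?_, by rw [hcount]; exact hf⟩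
      intro x hx
      simp only [hg, List.mem_ofFn] at hx
      obtain ⟨i, hi⟩ := hx
      split at hi
      · exact Or.inl hi.symm
      · exact Or.inr hi.symm
  have hginj : Function.Injective g := by
    intro f f' hff
    simp only [hg] at hff
    have h2 := congrFun (List.ofFn_injective hff)
    funext i
    have hi := h2 i
    by_cases h : f i <;> by_cases h' : f' i <;> simp [h, h'] at hi ⊢
    · exact hab hi
    · exact hab hi.symm
  have hFfin : F.Finite := Set.toFinite F
  have hcard : F.ncard = n.choose j := by
    have e : F ≃ {s : Finset (Fin n) // s.card = j} := by
      refine ⟨fun f => ⟨Finset.univ.filter (fun i => (f : Fin n → Bool) i = false), f.2⟩,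
        fun s => ⟨fun i => decide (i ∉ s.1), ?_⟩, ?_, ?_⟩
      · show (Finset.univ.filter _).card = j
        have hfs : (Finset.univ.filter (fun i => (fun i => decide (i ∉ s.1)) i = false)) = s.1 := by
          ext i
          simp
        rw [hfs]
        exact s.2
      · rintro ⟨f, hf⟩
        apply Subtype.ext
        funext i
        by_cases h : f i <;> simp [h]
      · rintro ⟨s, hs⟩
        apply Subtype.ext
        ext i
        simp
    calc F.ncard = Nat.card F := Nat.card_coe_set_eq F ▸ rfl
      _ = Nat.card {s : Finset (Fin n) // s.card = j} := Nat.card_congr e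
      _ = n.choose j := by
        rw [Nat.card_eq_fintype_card, Fintype.card_finset_len, Fintype.card_fin]
  constructor
  · rw [himg, Set.ncard_image_of_injOn (hginj.injOn), hcard]
  · rw [himg]; exact hFfin.image g

lemma count_add_count (a b : ℤ) (hab : a ≠ b) (l : List ℤ) (h : ∀ x ∈ l, x = a ∨ x = b) :
    l.count a + l.count b = l.length := by
  induction l with
  | nil => simp
  | cons x t ih =>
    have ht := ih (fun y hy => h y (List.mem_cons_of_mem x hy))
    rcases h x List.mem_cons_self with rfl | rfl <;>
      simp [List.count_cons, hab, hab.symm] <;> omega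

lemma sum_eq_counts (a b : ℤ) (hab : a ≠ b) (l : List ℤ) (h : ∀ x ∈ l, x = a ∨ x = b) :
    l.sum = (l.count a : ℤ) * a + (l.count b : ℤ) * b := by
  induction l with
  | nil => simp
  | cons x t ih =>
    have ht := ih (fun y hy => h y (List.mem_cons_of_mem x hy))
    rcases h x List.mem_cons_self with rfl | rfl <;>
      simp [List.count_cons, hab, hab.symm, ht] <;> push_cast <;> ring

lemma fst_sum (l : List (ℤ × ℤ)) : l.sum.1 = (l.map Prod.fst).sum := by
  induction l with
  | nil => simp
  | cons x t ih => simp [List.sum_cons, Prod.fst_add, ih]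

lemma snd_sum (l : List (ℤ × ℤ)) : l.sum.2 = (l.map Prod.snd).sum := by
  induction l with
  | nil => simp
  | cons x t ih => simp [List.sum_cons, Prod.snd_add, ih]

lemma sum_ones (l : List ℤ) (h : ∀ x ∈ l, x = 1) : l.sum = l.length := by
  induction l with
  | nil => simp
  | cons x t ih =>
    have := h x List.mem_cons_self
    subst this
    simp [ih (fun y hy => h y (List.mem_cons_of_mem _ hy))]
    ring

lemma recon (l : List (ℤ × ℤ)) (h : ∀ s ∈ l, s.1 = 1) :
    (l.map Prod.snd).map (fun x => ((1 : ℤ), x)) = l := by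
  induction l with
  | nil => simp
  | cons x t ih =>
    have hx := h x List.mem_cons_self
    simp only [List.map_cons, ih (fun y hy => h y (List.mem_cons_of_mem _ hy))]
    congr 1
    exact Prod.ext hx.symm rfl

lemma snd_map_pair (m : List ℤ) : (m.map (fun x => ((1 : ℤ), x))).map Prod.snd = m := by
  induction m with
  | nil => rfl
  | cons x t ih => simp [ih]

end HDP

open HDP in
/-- The number of lattice paths from (0,0) to (νj, 0) using steps (1,1) and
(1, −(ν−1)) that never go strictly below the x-axis equals (1/j)·C(νj, j−1). -/
theorem higher_dyck_path_count (ν j : ℕ) (hν : 2 ≤ ν) (hj : 1 ≤ j) :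
    ({l : List (ℤ × ℤ) |
        (∀ s ∈ l, s = (1, 1) ∨ s = (1, -((ν : ℤ) - 1))) ∧
        (∀ p : List (ℤ × ℤ), p <+: l → 0 ≤ p.sum.2) ∧
        l.sum = (((ν * j : ℕ) : ℤ), (0 : ℤ))}.ncard : ℚ) =
      (1 / j : ℚ) * ((ν * j).choose (j - 1)) := by
  classical
  set O : Set (List (ℤ × ℤ)) := {l : List (ℤ × ℤ) |
        (∀ s ∈ l, s = (1, 1) ∨ s = (1, -((ν : ℤ) - 1))) ∧
        (∀ p : List (ℤ × ℤ), p <+: l → 0 ≤ p.sum.2) ∧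
        l.sum = (((ν * j : ℕ) : ℤ), (0 : ℤ))} with hO
  have hν2 : (2 : ℤ) ≤ (ν : ℤ) := by exact_mod_cast hν
  set d : ℤ := -((ν : ℤ) - 1) with hd
  have h1d : (1 : ℤ) ≠ d := by rw [hd]; intro h; omega
  set n : ℕ := ν * j + 1 with hn
  set S : Set (List ℤ) := {l | l.length = n ∧ (∀ x ∈ l, x = 1 ∨ x = d) ∧ l.count d = j} with hS
  set A : Set (List ℤ) := {l | l ∈ S ∧ Good l} with hA
  set B : Set (List ℤ) := {l | l.length = ν * j ∧ (∀ x ∈ l, x = 1 ∨ x = d) ∧ l.count d = j ∧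
    ∀ p, p <+: l → 0 ≤ p.sum} with hB
  obtain ⟨hScard, hSfin⟩ := ncard_S 1 d h1d n j
  -- every member of S has sum 1
  have hsum1 : ∀ l ∈ S, l.sum = 1 := by
    rintro l ⟨hlen, hmem, hcnt⟩
    have hc := count_add_count 1 d h1d l hmem
    have hjn : j ≤ n := by
      have := List.count_le_length (a := d) (l := l)
      omega
    have h1 : l.count 1 = n - j := by omega
    rw [sum_eq_counts 1 d h1d l hmem, hcnt, hd, h1, hn]
    rw [Nat.cast_sub (show j ≤ ν * j + 1 from hjn)]
    push_cast [hn]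
    ring
  -- S is closed under rotation
  have hrotS : ∀ l ∈ S, ∀ k, l.rotate k ∈ S := by
    rintro l ⟨hlen, hmem, hcnt⟩ k
    refine ⟨by simp [hlen], fun x hx => hmem x (List.mem_rotate.mp hx), ?_⟩
    rw [List.Perm.count_eq (l.rotate_perm k)]
    exact hcnt
  have hAS : A ⊆ S := fun l hl => hl.1
  have hAfin : A.Finite := hSfin.subset hAS
  have hlenS : ∀ l ∈ S, l.length = n := fun l hl => hl.1
  -- the double-counting: every word in S has exactly one good rotation
  have key : hSfin.toFinset.card = hAfin.toFinset.card * n := by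
    set Sf := hSfin.toFinset with hSf
    set Af := hAfin.toFinset with hAf
    set P := (Sf ×ˢ Finset.range n).filter (fun p => Good (p.1.rotate p.2)) with hP
    have hmemP : ∀ p : List ℤ × ℕ, p ∈ P ↔ (p.1 ∈ S ∧ p.2 < n ∧ Good (p.1.rotate p.2)) := by
      intro p
      rw [hP, Finset.mem_filter, Finset.mem_product, Finset.mem_range,
        Set.Finite.mem_toFinset]
      tauto
    have h1 : P.card = Sf.card := by
      refine Finset.card_bij (fun p _ => p.1) ?_ ?_ ?_
      · intro p hp; rw [Set.Finite.mem_toFinset]; exact ((hmemP p).mp hp).1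
      · intro p hp q hq hpq
        obtain ⟨hpS, hpn, hpg⟩ := (hmemP p).mp hp
        obtain ⟨hqS, hqn, hqg⟩ := (hmemP q).mp hq
        have hpq' : p.1 = q.1 := hpq
        have hu := existsUnique_good_rotate p.1 (hsum1 p.1 hpS)
        have h2 : p.2 = q.2 := by
          refine hu.unique ⟨by rw [hlenS p.1 hpS]; exact hpn, hpg⟩ ⟨?_, ?_⟩
          · rw [hlenS p.1 hpS]; exact hqn
          · rw [hpq']; exact hqg
        exact Prod.ext hpq' h2
      · intro l hl
        rw [Set.Finite.mem_toFinset] at hl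
        obtain ⟨k, ⟨hk, hg⟩, -⟩ := existsUnique_good_rotate l (hsum1 l hl)
        refine ⟨(l, k), (hmemP _).mpr ⟨hl, ?_, hg⟩, rfl⟩
        rw [← hlenS l hl]; exact hk
    have h2 : P.card = (Af ×ˢ Finset.range n).card := by
      refine Finset.card_bij (fun p _ => (p.1.rotate p.2, p.2)) ?_ ?_ ?_
      · intro p hp
        obtain ⟨hpS, hpn, hpg⟩ := (hmemP p).mp hp
        rw [Finset.mem_product, Finset.mem_range, Set.Finite.mem_toFinset]
        exact ⟨⟨hrotS p.1 hpS p.2, hpg⟩, hpn⟩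
      · intro p hp q hq hpq
        obtain ⟨hpS, hpn, -⟩ := (hmemP p).mp hp
        obtain ⟨hqS, hqn, -⟩ := (hmemP q).mp hq
        have hpq' : (p.1.rotate p.2, p.2) = (q.1.rotate q.2, q.2) := hpq
        obtain ⟨h1', h2⟩ := Prod.ext_iff.mp hpq'
        have hrot : ∀ l ∈ S, ∀ k < n, (l.rotate k).rotate (n - k) = l := by
          intro l hl k hk
          rw [List.rotate_rotate]
          have he : k + (n - k) = l.length := by rw [hlenS l hl]; omega
          rw [he, List.rotate_length]
        have h3 := congrArg (fun m => m.rotate (n - p.2)) h1'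
        simp only at h3
        rw [hrot p.1 hpS p.2 hpn, h2, hrot q.1 hqS q.2 hqn] at h3
        exact Prod.ext h3 h2
      · rintro ⟨a, k⟩ hak
        rw [Finset.mem_product, Finset.mem_range, Set.Finite.mem_toFinset] at hak
        obtain ⟨⟨haS, hag⟩, hkn⟩ := hak
        have he : n - k + k = a.length := by rw [hlenS a haS]; omega
        refine ⟨(a.rotate (n - k), k), (hmemP _).mpr ⟨hrotS a haS _, hkn, ?_⟩, ?_⟩
        · rw [List.rotate_rotate, he, List.rotate_length]
          exact hag
        · show ((a.rotate (n - k)).rotate k, k) = (a, k)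
          rw [List.rotate_rotate, he, List.rotate_length]
    rw [← h1, h2, Finset.card_product, Finset.card_range]
  -- A is the image of B under consing a 1
  have hABcons : A = (fun t => (1 : ℤ) :: t) '' B := by
    ext l
    constructor
    · rintro ⟨⟨hlen, hmem, hcnt⟩, hgood⟩
      rw [good_def] at hgood
      have hne : l ≠ [] := by
        intro h
        rw [h] at hlen
        simp at hlen
      obtain ⟨x, t, rfl⟩ := List.exists_cons_of_ne_nil hne
      have hx : (0 : ℤ) < x := by
        have := hgood [x] ⟨t, rfl⟩ (by simp)
        simpa using this
      have hx1 : x = 1 := by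
        rcases hmem x List.mem_cons_self with h | h
        · exact h
        · rw [h, hd] at hx; omega
      subst hx1
      refine ⟨t, ⟨?_, ?_, ?_, ?_⟩, rfl⟩
      · have ht : t.length + 1 = n := by simpa using hlen
        omega
      · exact fun y hy => hmem y (List.mem_cons_of_mem _ hy)
      · rw [List.count_cons] at hcnt
        simpa [h1d] using hcnt
      · intro p hp
        obtain ⟨r, rfl⟩ := hp
        have := hgood (1 :: p) ⟨r, rfl⟩ (by simp)
        rw [List.sum_cons] at this
        linarith
    · rintro ⟨t, ⟨hlen, hmem, hcnt, hpre⟩, rfl⟩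
      refine ⟨⟨?_, ?_, ?_⟩, ?_⟩
      · simp [hlen, hn]
      · rintro x hx
        rcases List.mem_cons.mp hx with rfl | h
        · exact Or.inl rfl
        · exact hmem x h
      · rw [List.count_cons]
        simpa [h1d] using hcnt
      · rw [good_def]
        intro p hp hne
        obtain ⟨x, q, rfl⟩ := List.exists_cons_of_ne_nil hne
        obtain ⟨hx, hq⟩ := List.cons_prefix_cons.mp hp
        subst hx
        have := hpre q hq
        rw [List.sum_cons]
        linarith
  -- image of O under snd is B
  have himgO : (List.map Prod.snd) '' O = B := by
    ext m
    constructor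
    · rintro ⟨l, ⟨halpha, hpre, hsml⟩, rfl⟩
      have hfst : ∀ s ∈ l, s.1 = 1 := by
        intro s hs
        rcases halpha s hs with h | h <;> rw [h]
      have hsndmem : ∀ x ∈ l.map Prod.snd, x = 1 ∨ x = d := by
        intro x hx
        rw [List.mem_map] at hx
        obtain ⟨s, hs, rfl⟩ := hx
        rcases halpha s hs with h | h <;> rw [h, hd]
        · exact Or.inl rfl
        · exact Or.inr rfl
      have hlength : l.length = ν * j := by
        have h1 : l.sum.1 = ((ν * j : ℕ) : ℤ) := by rw [hsml]
        rw [fst_sum] at h1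
        rw [sum_ones (l.map Prod.fst) (by
          intro x hx
          rw [List.mem_map] at hx
          obtain ⟨s, hs, rfl⟩ := hx
          exact hfst s hs)] at h1
        simp at h1
        exact_mod_cast h1
      have hsnd0 : (l.map Prod.snd).sum = 0 := by
        rw [← snd_sum, hsml]
      have hcac := count_add_count 1 d h1d (l.map Prod.snd) hsndmem
      have hsec := sum_eq_counts 1 d h1d (l.map Prod.snd) hsndmem
      rw [hsnd0] at hsec
      have hmlen : (l.map Prod.snd).length = ν * j := by simp [hlength]
      rw [hmlen] at hcac
      have hcnt : (l.map Prod.snd).count d = j := by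
        have hν0 : (ν : ℤ) ≠ 0 := by omega
        have hccast : ((l.map Prod.snd).count 1 : ℤ) + ((l.map Prod.snd).count d : ℤ)
            = (ν : ℤ) * j := by exact_mod_cast hcac
        have hkey : (ν : ℤ) * ((l.map Prod.snd).count d : ℤ) = (ν : ℤ) * j := by
          rw [hd] at hsec
          linear_combination hccast + hsec
        have := mul_left_cancel₀ hν0 hkey
        exact_mod_cast this
      refine ⟨hmlen, hsndmem, hcnt, ?_⟩
      intro p hp
      rw [List.prefix_iff_eq_take.mp hp, ← List.map_take, ← snd_sum]
      exact hpre _ (List.take_prefix _ _)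
    · rintro ⟨hlen, hmem, hcnt, hpre⟩
      refine ⟨m.map (fun x => ((1 : ℤ), x)), ⟨?_, ?_, ?_⟩, ?_⟩
      · intro s hs
        rw [List.mem_map] at hs
        obtain ⟨x, hx, rfl⟩ := hs
        rcases hmem x hx with rfl | rfl
        · exact Or.inl rfl
        · right; rw [hd]
      · intro p hp
        rw [snd_sum]
        have h2 : p.map Prod.snd <+: (m.map (fun x => ((1 : ℤ), x))).map Prod.snd :=
          hp.map Prod.snd
        rw [snd_map_pair] at h2
        exact hpre _ h2
      · apply Prod.ext
        · rw [fst_sum]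
          rw [sum_ones _ (by
            intro x hx
            rw [List.mem_map] at hx
            obtain ⟨s, hs, rfl⟩ := hx
            rw [List.mem_map] at hs
            obtain ⟨y, hy, rfl⟩ := hs
            rfl)]
          simp [hlen]
        · rw [snd_sum, snd_map_pair]
          have hcac := count_add_count 1 d h1d m hmem
          rw [hlen, hcnt] at hcac
          rw [sum_eq_counts 1 d h1d m hmem, hcnt, hd]
          have hc1 : m.count 1 = ν * j - j := by omega
          have hjn : j ≤ ν * j := by nlinarith
          rw [hc1]
          push_cast [Nat.cast_sub hjn]
          ring
      · exact snd_map_pair m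
  have hinjO : Set.InjOn (List.map Prod.snd) O := by
    intro l hl l' hl' h
    have r1 := recon l (fun s hs => by rcases hl.1 s hs with h' | h' <;> rw [h'])
    have r2 := recon l' (fun s hs => by rcases hl'.1 s hs with h' | h' <;> rw [h'])
    rw [← r1, ← r2, h]
  -- assemble the cardinalities
  have hOB : O.ncard = B.ncard := by
    rw [← himgO]
    exact (Set.ncard_image_of_injOn hinjO).symm
  have hAB : A.ncard = B.ncard := by
    rw [hABcons]
    rw [Set.ncard_image_of_injOn]
    intro x _ y _ hxy
    exact (List.cons_eq_cons.mp hxy).2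
  have hmain : O.ncard * n = n.choose j := by
    rw [hOB, ← hAB, ← hScard, Set.ncard_eq_toFinset_card S hSfin,
      Set.ncard_eq_toFinset_card A hAfin, key]
  -- final arithmetic
  have hchoose : (ν * j + 1) * ((ν * j).choose (j - 1)) = ((ν * j + 1).choose j) * j := by
    have h := Nat.add_one_mul_choose_eq (ν * j) (j - 1)
    have hj1 : j - 1 + 1 = j := by omega
    rw [hj1] at h
    exact h
  have hNj : O.ncard * j = (ν * j).choose (j - 1) := by
    have h1 : (ν * j + 1) * (O.ncard * j) = (ν * j + 1) * ((ν * j).choose (j - 1)) := by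
      rw [hchoose, ← hmain, hn]
      ring
    exact Nat.eq_of_mul_eq_mul_left (by omega) h1
  have hjQ : (j : ℚ) ≠ 0 := Nat.cast_ne_zero.mpr (by omega)
  have hcast : (O.ncard : ℚ) * j = ((ν * j).choose (j - 1) : ℚ) := by
    exact_mod_cast congrArg (Nat.cast : ℕ → ℚ) hNj
  field_simp
  linarith [hcast]
end

section
/- For integers ν ≥ 2 and j ≥ i ≥ 1, the sum over all i-tuples (j_1,...,j_i) of positive integers with j_1+...+j_i = j of the products ζ_{j_1}^{(ν)} ζ_{j_2}^{(ν)} ··· ζ_{j_i}^{(ν)} equals (i/j)·C(νj, j−i), where ζ_m^{(ν)} = (1/m)·C(νm, m−1). -/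
open Finset

/-- Generalized Fuss-Catalan coefficient: `[x^n] B_q(x)^p` where `B_q = 1 + x*B_q^q`. -/
def Fc (q n p : ℕ) : ℚ :=
  if n = 0 then 1 else (p : ℚ) / (p + n * q) * ((p + n * q).choose n)

lemma Fc_zero_left (q p : ℕ) : Fc q 0 p = 1 := by simp [Fc]

lemma Fc_zero_right (q n : ℕ) : Fc q n 0 = if n = 0 then 1 else 0 := by
  unfold Fc
  split <;> simp

lemma Fc_rec (q : ℕ) (hq : 1 ≤ q) (n p : ℕ) :
    Fc q (n + 1) (p + 1) = Fc q (n + 1) p + Fc q n (p + q) := by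
  rcases Nat.eq_zero_or_pos n with hn | hn
  · subst hn
    simp only [Fc, if_neg one_ne_zero, if_pos rfl, Nat.choose_one_right, one_mul]
    have h1 : ((p : ℚ) + q) ≠ 0 := by
      have : (0:ℚ) < (p:ℚ) + q := by
        have : (0:ℚ) < (q:ℚ) := by exact_mod_cast hq
        positivity
      exact ne_of_gt this
    have h2 : ((p : ℚ) + 1 + q) ≠ 0 := by
      have : (0:ℚ) ≤ (p:ℚ) := by positivity
      have : (0:ℚ) < (q:ℚ) := by exact_mod_cast hq
      intro h; nlinarith
    push_cast
    field_simp
    simp only [one_mul, Nat.choose_one_right]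
    push_cast
    ring
  · have hn' : n ≠ 0 := by omega
    unfold Fc
    rw [if_neg (Nat.succ_ne_zero n), if_neg (Nat.succ_ne_zero n), if_neg hn']
    have e1 : p + 1 + (n + 1) * q = (p + (n + 1) * q) + 1 := by ring
    have e3 : p + q + n * q = p + (n + 1) * q := by ring
    rw [e1, e3]
    have hNn : n + 1 ≤ p + (n + 1) * q := by nlinarith
    generalize hNg : p + (n + 1) * q = N at hNn ⊢
    have hNQ : (N : ℚ) = (p : ℚ) + ((n : ℚ) + 1) * q := by
      rw [← hNg]; push_cast; ring
    have hN0 : ((N : ℚ)) ≠ 0 := Nat.cast_ne_zero.mpr (by omega)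
    have hN1 : ((N : ℚ) + 1) ≠ 0 := by positivity
    have hrel : ((N.choose (n+1) : ℚ)) * ((n : ℚ) + 1) = ((N.choose n : ℚ)) * ((N : ℚ) - n) := by
      have h := Nat.choose_succ_right_eq N n
      have hcast : ((N.choose (n + 1) * (n + 1) : ℕ) : ℚ) = ((N.choose n * (N - n) : ℕ) : ℚ) :=
        congrArg (Nat.cast (R := ℚ)) h
      push_cast [Nat.cast_sub (by omega : n ≤ N)] at hcast
      exact hcast
    have hpas : (((N + 1).choose (n + 1) : ℕ) : ℚ) = (N.choose (n+1) : ℚ) + (N.choose n : ℚ) := by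
      rw [Nat.choose_succ_succ' N n]; push_cast; ring
    push_cast
    rw [hpas]
    field_simp
    rw [hNQ] at hrel
    linear_combination (((p:ℚ) + ((n:ℚ)+1)*(q:ℚ)) * (q:ℚ)) * hrel

lemma Fc_conv (q : ℕ) (hq : 1 ≤ q) (r : ℕ) :
    ∀ n p : ℕ, ∑ kl ∈ Finset.HasAntidiagonal.antidiagonal n, Fc q kl.1 p * Fc q kl.2 r
      = Fc q n (p + r) := by
  intro n
  induction n using Nat.strong_induction_on with
  | _ n ih =>
    intro p
    induction p with
    | zero =>
      rw [Finset.sum_eq_single (0, n)]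
      · simp [Fc_zero_left, Fc_zero_right]
      · rintro ⟨a, b⟩ hmem hne
        rw [Finset.HasAntidiagonal.mem_antidiagonal] at hmem
        have ha : a ≠ 0 := by rintro rfl; simp at hmem; exact hne (by simp [hmem])
        rw [Fc_zero_right]
        simp [if_neg ha]
      · intro h
        exact absurd (Finset.HasAntidiagonal.mem_antidiagonal.mpr (by simp)) h
    | succ p ihp =>
      rcases Nat.eq_zero_or_pos n with hn | hn
      · subst hn
        simp [Fc_zero_left]
      · obtain ⟨m, rfl⟩ := Nat.exists_eq_succ_of_ne_zero (by omega : n ≠ 0)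
        rw [Finset.Nat.antidiagonal_succ, Finset.sum_cons, Finset.sum_map] at ihp ⊢
        simp only [Function.Embedding.coeFn_mk, Function.Embedding.coe_prodMap,
          Prod.map_fst, Prod.map_snd, Function.Embedding.refl_apply, id_eq,
          Prod.map_apply] at ihp ⊢
        have step : ∀ kl : ℕ × ℕ, kl ∈ Finset.HasAntidiagonal.antidiagonal m →
            Fc q (Nat.succ kl.1) (p + 1) * Fc q kl.2 r
              = Fc q (kl.1 + 1) p * Fc q kl.2 r + Fc q kl.1 (p + q) * Fc q kl.2 r := by
          intro kl _
          rw [Nat.succ_eq_add_one, Fc_rec q hq kl.1 p, add_mul]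
        rw [Finset.sum_congr rfl step, Finset.sum_add_distrib]
        have hconv : ∑ kl ∈ Finset.HasAntidiagonal.antidiagonal m, Fc q kl.1 (p + q) * Fc q kl.2 r
            = Fc q m (p + q + r) := by
          rcases Nat.eq_zero_or_pos m with hm | hm
          · subst hm; simp [Fc_zero_left, Fc_zero_right]
          · exact ih m (by omega) (p + q)
        rw [hconv]
        have h0 : Fc q (0:ℕ) (p+1) = Fc q (0:ℕ) p := by rw [Fc_zero_left, Fc_zero_left]
        have lhs1 : (Fc q (0:ℕ) (p+1)) * Fc q (m+1) r
            + (∑ kl ∈ Finset.HasAntidiagonal.antidiagonal m, Fc q (kl.1+1) p * Fc q kl.2 r)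
            = Fc q (m+1) (p + r) := by
          rw [h0, ← ihp]
        have key : Fc q (m+1) (p + r) + Fc q m (p + q + r) = Fc q (m+1) (p + 1 + r) := by
          have := Fc_rec q hq m (p + r)
          have e : p + r + q = p + q + r := by ring
          have e2 : p + r + 1 = p + 1 + r := by ring
          rw [e, e2] at this
          linarith [this]
        calc Fc q (0:ℕ) (p+1) * Fc q (m+1) r
              + ((∑ kl ∈ Finset.HasAntidiagonal.antidiagonal m, Fc q (kl.1+1) p * Fc q kl.2 r)
                + Fc q m (p + q + r))
            = (Fc q (0:ℕ) (p+1) * Fc q (m+1) r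
              + ∑ kl ∈ Finset.HasAntidiagonal.antidiagonal m, Fc q (kl.1+1) p * Fc q kl.2 r)
              + Fc q m (p + q + r) := by ring
          _ = Fc q (m+1) (p + r) + Fc q m (p + q + r) := by rw [lhs1]
          _ = Fc q (m+1) (p + 1 + r) := key

lemma Fc_pow (q : ℕ) (hq : 1 ≤ q) (r : ℕ) :
    ∀ i n : ℕ, ∑ f ∈ Finset.Nat.antidiagonalTuple i n, ∏ k, Fc q (f k) r
      = Fc q n (i * r) := by
  intro i
  induction i with
  | zero =>
    intro n
    rcases Nat.eq_zero_or_pos n with hn | hn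
    · subst hn
      simp [Finset.Nat.antidiagonalTuple_zero_zero, Fc_zero_left, Fc_zero_right]
    · obtain ⟨m, rfl⟩ := Nat.exists_eq_succ_of_ne_zero (by omega : n ≠ 0)
      simp [Finset.Nat.antidiagonalTuple_zero_succ, Fc_zero_right]
  | succ i ihi =>
    intro n
    -- reindex antidiagonalTuple (i+1) n by (antidiagonal n).sigma (antidiagonalTuple i ·.2)
    have hbij : ∑ f ∈ Finset.Nat.antidiagonalTuple (i+1) n, ∏ k, Fc q (f k) r
        = ∑ x ∈ (Finset.HasAntidiagonal.antidiagonal n).sigma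
            (fun kl => Finset.Nat.antidiagonalTuple i kl.2),
            Fc q x.1.1 r * ∏ k, Fc q (x.2 k) r := by
      refine (Finset.sum_nbij'
        (fun (f : Fin (i+1) → ℕ) =>
          (⟨(f 0, ∑ k, f (Fin.succ k)), Fin.tail f⟩ : (kl : ℕ × ℕ) × (Fin i → ℕ)))
        (fun (x : (kl : ℕ × ℕ) × (Fin i → ℕ)) => Fin.cons x.1.1 x.2) ?_ ?_ ?_ ?_ ?_)
      · intro f hf
        rw [Finset.Nat.mem_antidiagonalTuple] at hf
        refine Finset.mem_sigma.mpr ⟨Finset.HasAntidiagonal.mem_antidiagonal.mpr ?_,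
          Finset.Nat.mem_antidiagonalTuple.mpr rfl⟩
        rw [← hf, Fin.sum_univ_succ]
      · intro x hx
        rw [Finset.mem_sigma] at hx
        rw [Finset.Nat.mem_antidiagonalTuple]
        rw [Fin.sum_cons]
        rw [Finset.Nat.mem_antidiagonalTuple] at *
        have h2 := hx.2
        rw [h2]
        exact Finset.HasAntidiagonal.mem_antidiagonal.mp hx.1
      · intro f hf
        simp [Fin.cons_self_tail]
      · intro x hx
        rcases x with ⟨⟨a, b⟩, g⟩
        rw [Finset.mem_sigma] at hx
        have hg := Finset.Nat.mem_antidiagonalTuple.mp hx.2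
        simp only [Fin.cons_zero, Fin.tail_cons]
        congr 1
        simp [Fin.sum_cons, hg]
      · intro f hf
        rw [Fin.prod_univ_succ]
        simp [Fin.tail]
    rw [hbij, Finset.sum_sigma]
    have inner : ∀ kl : ℕ × ℕ, kl ∈ Finset.HasAntidiagonal.antidiagonal n →
        (∑ g ∈ Finset.Nat.antidiagonalTuple i kl.2, Fc q kl.1 r * ∏ k, Fc q (g k) r)
          = Fc q kl.1 r * Fc q kl.2 (i * r) := by
      intro kl _
      rw [← Finset.mul_sum, ihi kl.2]
    rw [Finset.sum_congr rfl inner, Fc_conv q hq (i * r) n r]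
    congr 1
    ring

lemma Fc_zeta (ν m : ℕ) (hν : 1 ≤ ν) :
    Fc ν m ν = (1 / ((m : ℚ) + 1)) * ((ν * (m + 1)).choose m) := by
  have hν0 : ((ν : ℚ)) ≠ 0 := Nat.cast_ne_zero.mpr (by omega)
  rcases Nat.eq_zero_or_pos m with hm | hm
  · subst hm
    simp [Fc_zero_left]
  · unfold Fc
    rw [if_neg (by omega)]
    have e : ν + m * ν = ν * (m + 1) := by ring
    rw [e]
    have hm1 : ((m : ℚ) + 1) ≠ 0 := by positivity
    congr 1
    field_simp
    ring

/-- For ν ≥ 2 and j ≥ i ≥ 1, the sum over i-tuples of positive integers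
summing to j of products of higher Catalan numbers equals (i/j)·C(νj, j−i). -/
theorem eta_formula (ν j i : ℕ) (hν : 2 ≤ ν) (hi : 1 ≤ i) (hij : i ≤ j)
    (ζ : ℕ → ℚ) (hζ : ∀ m : ℕ, 1 ≤ m → ζ m = (1 / m) * ((ν * m).choose (m - 1))) :
    ∑ f ∈ (Finset.Nat.antidiagonalTuple i j).filter (fun f => ∀ k, 0 < f k),
        ∏ k, ζ (f k) =
      ((i : ℚ) / j) * ((ν * j).choose (j - i)) := by
  have hq : 1 ≤ ν := by omega
  have hj : 1 ≤ j := le_trans hi hij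
  have hstep : ∑ f ∈ (Finset.Nat.antidiagonalTuple i j).filter (fun f => ∀ k, 0 < f k),
        ∏ k, ζ (f k)
      = ∑ g ∈ Finset.Nat.antidiagonalTuple i (j - i), ∏ k, Fc ν (g k) ν := by
    refine Finset.sum_nbij'
      (fun (f : Fin i → ℕ) => fun k => f k - 1)
      (fun (g : Fin i → ℕ) => fun k => g k + 1) ?_ ?_ ?_ ?_ ?_
    · intro f hf
      rw [Finset.mem_filter] at hf
      obtain ⟨hf1, hf2⟩ := hf
      rw [Finset.Nat.mem_antidiagonalTuple] at hf1 ⊢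
      show ∑ k, (f k - 1) = j - i
      rw [Finset.sum_tsub_distrib Finset.univ (fun k _ => hf2 k), hf1]
      simp
    · intro g hg
      rw [Finset.Nat.mem_antidiagonalTuple] at hg
      rw [Finset.mem_filter, Finset.Nat.mem_antidiagonalTuple]
      constructor
      · show ∑ k, (g k + 1) = j
        rw [Finset.sum_add_distrib, hg]
        simp
        omega
      · intro k
        show 0 < g k + 1
        omega
    · intro f hf
      rw [Finset.mem_filter] at hf
      funext k
      show (f k - 1) + 1 = f k
      have := hf.2 k
      omega
    · intro g _
      funext k
      show (g k + 1) - 1 = g k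
      omega
    · intro f hf
      rw [Finset.mem_filter] at hf
      refine Finset.prod_congr rfl fun k _ => ?_
      have hk : 1 ≤ f k := hf.2 k
      have e : f k = (f k - 1) + 1 := by omega
      rw [e, hζ ((f k - 1) + 1) (by omega), Fc_zeta ν (f k - 1) hq]
      push_cast
      norm_num
  rw [hstep, Fc_pow ν hq ν i (j - i)]
  have hj0 : ((j : ℚ)) ≠ 0 := Nat.cast_ne_zero.mpr (by omega)
  have hν0 : ((ν : ℚ)) ≠ 0 := Nat.cast_ne_zero.mpr (by omega)
  rcases Nat.eq_zero_or_pos (j - i) with hd | hd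
  · have hij' : i = j := by omega
    subst hij'
    rw [hd]
    rw [Fc_zero_left]
    simp [div_self hj0]
  · unfold Fc
    rw [if_neg (by omega)]
    have e : i * ν + (j - i) * ν = ν * j := by
      have : i * ν + (j - i) * ν = (i + (j - i)) * ν := by ring
      rw [this]
      have : i + (j - i) = j := by omega
      rw [this]; ring
    rw [e]
    have ed : ((i * ν : ℕ) : ℚ) + ((j - i : ℕ) : ℚ) * ((ν : ℕ) : ℚ) = (ν : ℚ) * j := by
      push_cast [Nat.cast_sub hij]
      ring
    rw [ed]
    congr 1
    push_cast
    field_simp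
end

section
/- For integers ν ≥ 2 and j ≥ 1: j! · (−(r_ν−1)·μ_ν·ζ_j + μ_ν·η_j + (1/2)·l_j) = (νj−1)!/((ν−1)j+2)!, where μ_ν = (ν−1)²/(4ν(ν+1)), r_ν = 3(ν+1)/(ν−1), ζ_j = (1/j)·C(νj, j−1), η_j = (2/j)·C(νj, j−2), and l_j = (1/j)·C(νj−1, j−1). -/
set_option maxHeartbeats 2000000 in
/-- The rational identity yielding the genus 0 map count:
j!·(−(r_ν−1)μ_ν ζ_j + μ_ν η_j + (1/2) l_j) = (νj−1)!/((ν−1)j+2)!. -/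
theorem genus_zero_count_identity (ν j : ℕ) (hν : 2 ≤ ν) (hj : 1 ≤ j)
    (μ r ζ η l : ℚ)
    (hμ : μ = ((ν : ℚ) - 1) ^ 2 / (4 * ν * (ν + 1)))
    (hr : r = 3 * ((ν : ℚ) + 1) / ((ν : ℚ) - 1))
    (hζ : ζ = (1 / j : ℚ) * ((ν * j).choose (j - 1)))
    (hη : (j = 1 → η = 0) ∧ (2 ≤ j → η = (2 / j : ℚ) * ((ν * j).choose (j - 2))))
    (hl : l = (1 / j : ℚ) * ((ν * j - 1).choose (j - 1))) :
    (j.factorial : ℚ) * (-(r - 1) * μ * ζ + μ * η + (1 / 2) * l) =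
      ((ν * j - 1).factorial : ℚ) / (((ν - 1) * j + 2).factorial) := by
  obtain ⟨hη1, hη2⟩ := hη
  obtain ⟨v, rfl⟩ : ∃ v, ν = v + 2 := ⟨ν - 2, by omega⟩
  rcases Nat.lt_or_ge j 2 with hj2 | hj2
  · -- case j = 1
    obtain rfl : j = 1 := by omega
    rw [hη1 rfl] at *
    subst hμ hr hζ hl
    have e1 : (v + 2) * 1 - 1 = v + 1 := by omega
    have e2 : (v + 2 - 1) * 1 + 2 = v + 3 := by omega
    rw [e1, e2]
    simp only [Nat.choose_zero_right, Nat.factorial_one, Nat.cast_one]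
    have hf : ((v + 3).factorial : ℚ) = (v + 3) * ((v + 2) * (v + 1).factorial) := by
      rw [show v + 3 = (v + 2) + 1 from rfl, Nat.factorial_succ,
        show v + 2 = (v + 1) + 1 from rfl, Nat.factorial_succ]
      push_cast; ring
    rw [hf]
    have h1 : ((v + 1).factorial : ℚ) ≠ 0 := by positivity
    have h2 : ((v : ℚ) + 2) ≠ 0 := by positivity
    have h3 : ((v : ℚ) + 3) ≠ 0 := by positivity
    have h4 : ((v : ℚ) + 2 - 1) ≠ 0 := by intro h; nlinarith
    have h5 : ((v : ℚ) + 2 + 1) ≠ 0 := by positivity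
    push_cast
    field_simp
    simp only [Nat.choose_zero_right, Nat.cast_one]
    ring
  · -- case j ≥ 2
    obtain ⟨k, rfl⟩ : ∃ k, j = k + 2 := ⟨j - 2, by omega⟩
    rw [hη2 hj2] at *
    subst hμ hr hζ hl
    have e1 : (k + 2) - 1 = k + 1 := rfl
    have e2 : (k + 2) - 2 = k := rfl
    have q1 : (v + 2) * (k + 2) = v*k + 2*v + 2*k + 4 := by ring
    have q2 : (v + 2 - 1) * (k + 2) = (v+1) * (k+2) := rfl
    have q3 : (v + 1) * (k + 2) = v*k + 2*v + k + 2 := by ring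
    have e3 : (v + 2) * (k + 2) - 1 = v*k + 2*v + 2*k + 3 := by omega
    have e4 : (v + 2 - 1) * (k + 2) + 2 = v*k + 2*v + k + 4 := by omega
    rw [e1, e2, e3, e4]
    have c1 : (((v + 2) * (k + 2)).choose (k + 1) : ℚ)
        = ((v + 2) * (k + 2)).factorial / ((k+1).factorial * (v*k + 2*v + k + 3).factorial) := by
      rw [Nat.cast_choose ℚ (by nlinarith : k + 1 ≤ (v + 2) * (k + 2))]
      have : (v + 2) * (k + 2) - (k + 1) = v*k + 2*v + k + 3 := by omega
      rw [this]
    have c2 : (((v + 2) * (k + 2)).choose k : ℚ)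
        = ((v + 2) * (k + 2)).factorial / (k.factorial * (v*k + 2*v + k + 4).factorial) := by
      rw [Nat.cast_choose ℚ (by nlinarith : k ≤ (v + 2) * (k + 2))]
      have : (v + 2) * (k + 2) - k = v*k + 2*v + k + 4 := by omega
      rw [this]
    have c3 : ((v*k + 2*v + 2*k + 3).choose (k + 1) : ℚ)
        = (v*k + 2*v + 2*k + 3).factorial / ((k+1).factorial * (v*k + 2*v + k + 2).factorial) := by
      rw [Nat.cast_choose ℚ (by omega : k + 1 ≤ v*k + 2*v + 2*k + 3)]
      have : v*k + 2*v + 2*k + 3 - (k + 1) = v*k + 2*v + k + 2 := by omega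
      rw [this]
    rw [c1, c2, c3]
    -- factorial expansions
    have f1 : (((v + 2) * (k + 2)).factorial : ℚ)
        = ((v:ℚ)*k + 2*v + 2*k + 4) * (v*k + 2*v + 2*k + 3).factorial := by
      rw [show (v + 2) * (k + 2) = (v*k + 2*v + 2*k + 3) + 1 by ring, Nat.factorial_succ]
      push_cast; ring
    have f2 : ((v*k + 2*v + k + 4).factorial : ℚ)
        = ((v:ℚ)*k + 2*v + k + 4) * (((v:ℚ)*k + 2*v + k + 3) * (v*k + 2*v + k + 2).factorial) := by
      rw [show v*k + 2*v + k + 4 = (v*k + 2*v + k + 3) + 1 from rfl, Nat.factorial_succ,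
        show v*k + 2*v + k + 3 = (v*k + 2*v + k + 2) + 1 from rfl, Nat.factorial_succ]
      push_cast; ring
    have f3 : ((v*k + 2*v + k + 3).factorial : ℚ)
        = ((v:ℚ)*k + 2*v + k + 3) * (v*k + 2*v + k + 2).factorial := by
      rw [show v*k + 2*v + k + 3 = (v*k + 2*v + k + 2) + 1 from rfl, Nat.factorial_succ]
      push_cast; ring
    have f4 : ((k + 2).factorial : ℚ) = ((k:ℚ) + 2) * (((k:ℚ) + 1) * k.factorial) := by
      rw [show k + 2 = (k + 1) + 1 from rfl, Nat.factorial_succ, Nat.factorial_succ]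
      push_cast; ring
    have f5 : ((k + 1).factorial : ℚ) = ((k:ℚ) + 1) * k.factorial := by
      rw [Nat.factorial_succ]; push_cast; ring
    rw [f1, f2, f3, f4, f5]
    have h1 : (k.factorial : ℚ) ≠ 0 := by positivity
    have h2 : ((v*k + 2*v + k + 2).factorial : ℚ) ≠ 0 := by positivity
    have h3 : ((v*k + 2*v + 2*k + 3).factorial : ℚ) ≠ 0 := by positivity
    have h4 : ((k:ℚ) + 1) ≠ 0 := by positivity
    have h5 : ((k:ℚ) + 2) ≠ 0 := by positivity
    have h6 : ((v:ℚ)*k + 2*v + k + 3) ≠ 0 := by positivity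
    have h7 : ((v:ℚ)*k + 2*v + k + 4) ≠ 0 := by positivity
    have h8 : ((v:ℚ) + 2 - 1) ≠ 0 := by intro h; nlinarith
    have h9 : ((v:ℚ) + 2) ≠ 0 := by positivity
    have h10 : ((v:ℚ) + 2 + 1) ≠ 0 := by positivity
    push_cast
    set K := (k.factorial : ℚ) with hKdef
    set F := ((v*k + 2*v + k + 2).factorial : ℚ) with hFdef
    set G := ((v*k + 2*v + 2*k + 3).factorial : ℚ) with hGdef
    set x := (v:ℚ)
    set y := (k:ℚ)
    field_simp
    have h6' : (y + 2) * x + y + 3 ≠ 0 := by convert h6 using 1; ring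
    have h7' : (y + 2) * x + y + 4 ≠ 0 := by convert h7 using 1; ring
    generalize hB : (y + 2) * x + y + 3 = B at h6' ⊢
    generalize hE : (y + 2) * x + y + 4 = E at h7' ⊢
    field_simp
    rw [← hB, ← hE]
    ring
end

section
/- Let z be a formal power series over ℚ with constant term 1 satisfying s·z(s)^ν = z(s) − 1 for an integer ν ≥ 2. Then the coefficient of s^j in z(s) is (1/j)·C(νj, j−1) for all j ≥ 1. -/
open PowerSeries

/-- If z is a formal power series over ℚ with constant term 1 satisfying
s·z^ν = z − 1, then the coefficient of s^j in z is (1/j)·C(νj, j−1) for j ≥ 1. -/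
theorem higher_catalan_gf (ν : ℕ) (hν : 2 ≤ ν) (z : PowerSeries ℚ)
    (h0 : constantCoeff z = 1) (heq : X * z ^ ν = z - 1) :
    ∀ j : ℕ, 1 ≤ j → coeff j z = (1 / j : ℚ) * ((ν * j).choose (j - 1)) := by
  have hz : z = 1 + X * z ^ ν := by rw [heq]; ring
  have key : ∀ j : ℕ, 1 ≤ j → ∀ m : ℕ,
      coeff j (z ^ m) = ((m : ℚ)/(ν*j+m)) * ((ν*j+m).choose j) := by
    intro j
    induction j using Nat.strong_induction_on with
    | _ j ih =>
      intro hj m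
      induction m with
      | zero =>
        have : j ≠ 0 := by omega
        simp [coeff_one, this]
      | succ m ihm =>
        have hstep : z ^ (m+1) = z ^ m + X * z ^ (ν + m) := by
          calc z ^ (m+1) = z ^ m * z := by ring
          _ = z ^ m * (1 + X * z ^ ν) := by rw [← hz]
          _ = z ^ m + X * z ^ (ν + m) := by ring
        obtain ⟨k, rfl⟩ : ∃ k, j = k + 1 := ⟨j - 1, by omega⟩
        rw [hstep, map_add, coeff_succ_X_mul, ihm]
        rcases Nat.eq_zero_or_pos k with rfl | hk
        · -- j = 1
          have : (coeff 0) (z ^ (ν + m)) = 1 := by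
            rw [coeff_zero_eq_constantCoeff, map_pow, h0, one_pow]
          rw [this]
          have h1 : ((ν : ℚ) * 1 + m) ≠ 0 := by positivity
          have h2 : ((ν : ℚ) * 1 + (m+1)) ≠ 0 := by positivity
          rw [Nat.choose_one_right, Nat.choose_one_right]
          push_cast
          field_simp
        · -- j = k+1 ≥ 2
          have hihk := ih k (by omega) hk (ν + m)
          have hre : ν * k + (ν + m) = ν * (k+1) + m := by ring
          rw [hre] at hihk
          rw [hihk]
          set N := ν * (k+1) + m with hN
          have hjN : k + 1 ≤ N := by nlinarith
          -- Pascal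
          have hpas : (N+1).choose (k+1) = N.choose k + N.choose (k+1) :=
            Nat.choose_succ_succ N k
          -- ratio
          have hrat : N.choose (k+1) * (k+1) = N.choose k * (N - k) :=
            Nat.choose_succ_right_eq N k
          have hratQ : (N.choose (k+1) : ℚ) * (k+1) = (N.choose k : ℚ) * ((N:ℚ) - k) := by
            rw [← Nat.cast_sub (by omega : k ≤ N)]
            exact_mod_cast hrat
          have hNQ : (N : ℚ) = ν * (k+1) + m := by rw [hN]; push_cast; ring
          have hd1 : ((ν:ℚ) * (k+1) + m) ≠ 0 := by positivity
          have hd2 : ((ν:ℚ) * (k+1) + (m+1)) ≠ 0 := by positivity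
          have harith : ν * (k+1) + (m+1) = N + 1 := by omega
          rw [harith, hpas]
          push_cast
          rw [hNQ] at hratQ
          rw [show ((ν:ℚ) * ↑k + (↑ν + ↑m)) = ↑ν * (↑k + 1) + ↑m by ring]
          field_simp
          linear_combination (-(ν:ℚ)) * hratQ
  intro j hj
  have h := key j hj 1
  rw [pow_one] at h
  rw [h]
  obtain ⟨k, rfl⟩ : ∃ k, j = k + 1 := ⟨j - 1, by omega⟩
  have hmc := Nat.add_one_mul_choose_eq (ν * (k+1)) k
  have hmcQ : ((ν*(k+1)) + 1 : ℚ) * ((ν*(k+1)).choose k : ℚ)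
      = ((ν*(k+1)+1).choose (k+1) : ℚ) * (k+1) := by exact_mod_cast hmc
  have hd1 : ((ν:ℚ) * (k+1) + 1) ≠ 0 := by positivity
  have hd2 : ((k:ℚ) + 1) ≠ 0 := by positivity
  simp only [Nat.add_sub_cancel]
  push_cast at hmcQ ⊢
  field_simp
  linear_combination -hmcQ
end

section
/- Let z be the formal power series with constant term 1 satisfying s·z^ν = z − 1 (ν ≥ 2), and let α ≥ 0 be an integer. Then the coefficient of s^j in z^{α+1}/(ν − (ν−1)z) equals C(α+νj, j) for all j ≥ 0. -/
open PowerSeries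

lemma choose_sum_aux (n r : ℕ) : ∀ t : ℕ,
    ((n.choose (r+1) : ℚ) + ∑ i ∈ Finset.range t, (((n+i).choose r : ℕ) : ℚ))
      = (((n+t).choose (r+1) : ℕ) : ℚ) := by
  intro t
  induction t with
  | zero => simp
  | succ t ih =>
    rw [Finset.sum_range_succ, ← add_assoc, ih,
      show n+(t+1) = (n+t)+1 from rfl, Nat.choose_succ_succ]
    push_cast
    ring

/-- If z is the power series with constant term 1 satisfying s·z^ν = z − 1,
then the coefficient of s^j in z^{α+1}/(ν − (ν−1)z) equals C(α+νj, j). -/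
theorem polya_szego_gould_second (ν : ℕ) (hν : 2 ≤ ν) (z : PowerSeries ℚ)
    (h0 : constantCoeff z = 1) (heq : X * z ^ ν = z - 1) (α : ℕ) :
    ∀ j : ℕ, coeff j (z ^ (α + 1) * (C (ν : ℚ) - C ((ν : ℚ) - 1) * z)⁻¹) =
      ((α + ν * j).choose j : ℚ) := by
  set A : ℚ⟦X⟧ := C (ν : ℚ) - C ((ν : ℚ) - 1) * z with hAdef
  have zeq : z = 1 + X * z ^ ν := by linear_combination -heq
  have hA0 : constantCoeff A = 1 := by
    rw [hAdef]; simp [h0]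
  have hAinv : A * A⁻¹ = 1 :=
    PowerSeries.mul_inv_cancel _ (by rw [hA0]; exact one_ne_zero)
  have hder : (d⁄dX ℚ z) * A = z ^ (ν + 1) := by
    have hzp : z ^ (ν - 1) * z = z ^ ν := by
      rw [← pow_succ]; congr 1; omega
    have h2 := congrArg (d⁄dX ℚ) heq
    rw [Derivation.leibniz, Derivation.leibniz_pow, derivative_X, map_sub,
      Derivation.map_one_eq_zero] at h2
    simp only [smul_eq_mul, nsmul_eq_mul, mul_one, sub_zero] at h2
    have hCν : C ((ν : ℚ)) = ((ν : ℕ) : ℚ⟦X⟧) := (map_natCast C ν).symm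
    have hCν1 : C ((ν : ℚ) - 1) = ((ν : ℕ) : ℚ⟦X⟧) - 1 := by
      rw [map_sub, map_one, map_natCast]
    rw [hAdef, hCν, hCν1]
    linear_combination (-z) * h2 + ((ν : ℚ⟦X⟧) * X * (d⁄dX ℚ z)) * hzp
      + ((ν : ℚ⟦X⟧) * (d⁄dX ℚ z)) * heq
  have hG0 : ∀ a : ℕ, coeff 0 (z ^ (a+1) * A⁻¹) = 1 := by
    intro a
    rw [coeff_zero_eq_constantCoeff, map_mul, map_pow, h0, one_pow, one_mul,
      PowerSeries.constantCoeff_inv, hA0, inv_one]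
  have hrec : ∀ a k : ℕ, coeff (k+1) (z ^ (a+2) * A⁻¹)
      = coeff (k+1) (z ^ (a+1) * A⁻¹) + coeff k (z ^ (a+ν+1) * A⁻¹) := by
    intro a k
    have e : z ^ (a+ν+1) = z ^ (a+1) * z ^ ν := by rw [← pow_add]; congr 1; omega
    have hp : z ^ (a+2) * A⁻¹ = z ^ (a+1) * A⁻¹ + X * (z ^ (a+ν+1) * A⁻¹) := by
      have h1 : z ^ (a+2) = z ^ (a+1) + X * z ^ (a+ν+1) := by
        rw [e, show a+2 = (a+1)+1 from rfl, pow_succ]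
        linear_combination (z ^ (a+1)) * zeq
      rw [h1]; ring
    rw [hp, map_add, coeff_succ_X_mul]
  have hdc : ∀ m k : ℕ, ((k:ℚ)+1) * coeff (k+1) (z ^ (m+1))
      = ((m:ℚ)+1) * coeff k (z ^ (m+ν+1) * A⁻¹) := by
    intro m k
    have e : z ^ (m+ν+1) = z ^ m * z ^ (ν+1) := by rw [← pow_add, Nat.add_assoc]
    have h4 : d⁄dX ℚ (z ^ (m+1)) * A = C ((m:ℚ)+1) * z ^ (m+ν+1) := by
      rw [Derivation.leibniz_pow, e]
      have hC : C ((m:ℚ)+1) = ((m+1 : ℕ) : ℚ⟦X⟧) := by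
        rw [← map_natCast C (m+1)]; push_cast; ring
      rw [hC]
      simp only [nsmul_eq_mul, smul_eq_mul]
      push_cast
      linear_combination (((m:ℚ⟦X⟧)+1) * z ^ m) * hder
    have h3 : d⁄dX ℚ (z ^ (m+1)) = C ((m:ℚ)+1) * (z ^ (m+ν+1) * A⁻¹) := by
      calc d⁄dX ℚ (z ^ (m+1)) = d⁄dX ℚ (z ^ (m+1)) * (A * A⁻¹) := by rw [hAinv, mul_one]
        _ = (d⁄dX ℚ (z ^ (m+1)) * A) * A⁻¹ := by ring
        _ = _ := by rw [h4]; ring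
    have h5 := congrArg (coeff k) h3
    rw [coeff_derivative, coeff_C_mul] at h5
    linear_combination h5
  intro j
  induction j generalizing α with
  | zero =>
    simpa using hG0 α
  | succ j ih =>
    -- base case: α = 0
    have key0 : coeff (j+1) (z ^ (0+1) * A⁻¹) = (((ν+ν*j).choose (j+1) : ℕ) : ℚ) := by
      have h1 := hdc (ν-1) j
      rw [show ν-1+1 = ν by omega, show ν-1+ν+1 = 2*ν-1+1 by omega] at h1
      have h1' : ((j:ℚ)+1) * coeff (j+1) (z ^ ν)
          = (ν:ℚ) * coeff j (z ^ (2*ν-1+1) * A⁻¹) := by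
        rw [h1]; congr 1; push_cast [Nat.cast_sub (by omega : 1 ≤ ν)]; ring
      have h2 := ih (2*ν-1)
      rw [h2] at h1'
      have h3 : coeff (j+2) z = coeff (j+1) (z ^ ν) := by
        have := congrArg (coeff (j+2)) zeq
        rwa [map_add, coeff_one, if_neg (by omega), zero_add,
          show j+2 = (j+1)+1 from rfl, coeff_succ_X_mul] at this
      have h4 := hdc 0 (j+1)
      rw [pow_one, show (0:ℕ)+ν+1 = ν+1 by omega] at h4
      push_cast at h4
      -- sum relation
      have hsum : ∀ t : ℕ, coeff (j+1) (z ^ (t+1) * A⁻¹)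
          = coeff (j+1) (z ^ (0+1) * A⁻¹)
            + ∑ i ∈ Finset.range t, (((ν+ν*j+i).choose j : ℕ) : ℚ) := by
        intro t
        induction t with
        | zero => simp
        | succ t ih2 =>
          rw [show t+1+1 = t+2 from rfl, hrec t j, ih2, Finset.sum_range_succ,
            ih (t+ν), show t+ν+ν*j = ν+ν*j+t by ring]
          ring
      have h5 := hsum ν
      have h6 := choose_sum_aux (ν+ν*j) j ν
      have natid := Nat.add_one_mul_choose_eq (2*ν-1+ν*j) j
      rw [show 2*ν-1+ν*j+1 = ν+ν*j+ν by omega] at natid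
      have natid' : ((ν+ν*j+ν:ℕ):ℚ) * (((2*ν-1+ν*j).choose j : ℕ) : ℚ)
          = (((ν+ν*j+ν).choose (j+1) : ℕ) : ℚ) * ((j:ℚ)+1) := by
        exact_mod_cast congrArg (Nat.cast : ℕ → ℚ) natid
      have hj : ((j:ℚ)+1) ≠ 0 := by positivity
      apply mul_left_cancel₀ hj
      -- combine
      have hcast : ((ν+ν*j+ν:ℕ):ℚ) = (ν:ℚ)*((j:ℚ)+2) := by push_cast; ring
      rw [hcast] at natid'
      linear_combination (-((j:ℚ)+1)) * h5 + ((j:ℚ)+2) * h1' + ((j:ℚ)+2) * ((j:ℚ)+1) * h3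
        - ((j:ℚ)+1) * h4 - ((j:ℚ)+1) * h6 + natid'
    -- induction on α
    induction α with
    | zero =>
      rw [key0]
      congr 2
      ring
    | succ a iha =>
      rw [show a+1+1 = a+2 from rfl, hrec a j, iha, ih (a+ν),
        show a+1+ν*(j+1) = (a+ν*(j+1))+1 by omega, Nat.choose_succ_succ,
        show a+ν+ν*j = a+ν*(j+1) by ring]
      push_cast
      ring
end

section
/- Let z be the formal power series with constant term 1 satisfying s·z^ν = z − 1 (ν ≥ 2). Then the formal derivative satisfies z′·(ν − (ν−1)z) = z^{ν+1}. -/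
open PowerSeries

/-- If z is the power series with constant term 1 satisfying s·z^ν = z − 1,
then its formal derivative satisfies z′·(ν − (ν−1)z) = z^{ν+1}. -/
theorem gf_derivative_identity (ν : ℕ) (hν : 2 ≤ ν) (z : PowerSeries ℚ)
    (h0 : constantCoeff (R := ℚ) z = 1) (heq : X * z ^ ν = z - 1) :
    (derivative ℚ z) * (C (R := ℚ) (ν : ℚ) - C (R := ℚ) ((ν : ℚ) - 1) * z) = z ^ (ν + 1) := by
  obtain ⟨m, rfl⟩ : ∃ m, ν = m + 2 := ⟨ν - 2, by omega⟩
  have h1 := congrArg (derivative ℚ) heq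
  rw [Derivation.leibniz, Derivation.leibniz_pow, map_sub, Derivation.map_one_eq_zero,
    sub_zero, derivative_X] at h1
  simp only [smul_eq_mul, nsmul_eq_mul, mul_one, Nat.add_sub_cancel] at h1
  have h2 : m + 2 - 1 = m + 1 := rfl
  rw [h2] at h1
  have e : ((m + 2 : ℕ) : ℚ) - 1 = ((m + 1 : ℕ) : ℚ) := by push_cast; ring
  rw [e, map_natCast, map_natCast]
  push_cast at h1 ⊢
  linear_combination ((m : PowerSeries ℚ) + 2) * (derivative ℚ z) * heq - z * h1
end

section
/- For integers ν ≥ 2 and j ≥ 1, the j-th coefficient of the formal power series −(1/12)·log(ν − (ν−1)·z(s)) equals (1/(12j))·Σ_{k=1}^{j} (ν−1)^k · C(νj, j−k), where z is the generating function of the higher Catalan numbers. -/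
open PowerSeries Finset

lemma natsum (M n m : ℕ) (hn : 1 ≤ n) (hm : 1 ≤ m) :
    ∑ i ∈ range (m+1), (if i ≤ n then m.choose i * i * (M.choose (n - i)) else 0)
      = m * ((M + m - 1).choose (n-1)) := by
  rw [Finset.sum_range_succ']
  simp only [Nat.choose_zero_right, Nat.mul_zero, Nat.zero_mul, mul_zero, if_pos (Nat.zero_le n),
    add_zero]
  have hterm : ∀ t, (if t + 1 ≤ n then m.choose (t+1) * (t+1) * (M.choose (n - (t+1))) else 0)
      = m * (if t ≤ n - 1 then (m-1).choose t * (M.choose ((n-1) - t)) else 0) := by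
    intro t
    have h1 : (t + 1 ≤ n) = (t ≤ n - 1) := by
      simp only [eq_iff_iff]; omega
    have h2 : n - (t+1) = (n-1) - t := by omega
    have h3 : m.choose (t+1) * (t+1) = m * (m-1).choose t := by
      have := Nat.add_one_mul_choose_eq (m-1) t
      rw [show m - 1 + 1 = m from by omega] at this
      omega
    by_cases hc : t + 1 ≤ n
    · rw [if_pos hc, if_pos (show t ≤ n - 1 by omega), h2, h3]; ring
    · rw [if_neg hc, if_neg (show ¬ t ≤ n - 1 by omega), mul_zero]
  rw [Finset.sum_congr rfl (fun t _ => hterm t), ← Finset.mul_sum]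
  congr 1
  have hV : (M + m - 1).choose (n-1) = ((m-1) + M).choose (n-1) := by congr 1; omega
  rw [hV, Nat.add_choose_eq, Finset.Nat.sum_antidiagonal_eq_sum_range_succ_mk]
  have hn1 : (n - 1).succ = n := by omega
  rw [hn1]
  -- now: ∑ t ∈ range m, (if t ≤ n-1 then ...) = ∑ t ∈ range n, C(m-1,t)*C(M, n-1-t)
  have key : ∀ t, (if t ≤ n - 1 then (m-1).choose t * (M.choose ((n-1) - t)) else 0)
      = if t < n then (m-1).choose t * (M.choose ((n-1) - t)) else 0 := by
    intro t
    by_cases hc : t < n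
    · rw [if_pos (show t ≤ n - 1 by omega), if_pos hc]
    · rw [if_neg (show ¬ t ≤ n - 1 by omega), if_neg hc]
  simp only [key]
  rw [← Finset.sum_filter]
  rw [show (range m).filter (· < n) = (range n).filter (· < m) by
    ext t; simp [Finset.mem_filter, and_comm]]
  rw [Finset.sum_filter]
  apply Finset.sum_congr rfl
  intro t ht
  split
  · rfl
  · rename_i h
    rw [Nat.choose_eq_zero_of_lt (by omega), Nat.zero_mul]

lemma fuss (ν : ℕ) (hν : 1 ≤ ν) (z : PowerSeries ℚ) (hz : z = 1 + X * z ^ ν) :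
    ∀ n m : ℕ, 1 ≤ m →
      coeff n (z ^ m) = (m : ℚ) / (ν*n + m) * ((ν*n + m).choose n) := by
  intro n
  induction n using Nat.strong_induction_on with
  | _ n IH =>
    intro m hm
    rcases Nat.eq_zero_or_pos n with hn | hn
    · subst hn
      have hc : constantCoeff z = 1 := by
        rw [hz]; simp
      rw [coeff_zero_eq_constantCoeff, map_pow, hc, one_pow]
      have : ((m:ℚ)) ≠ 0 := by positivity
      simp [this]
    · -- expand z^m
      have hzm : z ^ m = ∑ i ∈ range (m+1),
          X ^ i * z ^ (ν*i) * C (m.choose i : ℚ) := by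
        conv_lhs => rw [hz]
        rw [add_comm (1 : PowerSeries ℚ), add_pow]
        apply Finset.sum_congr rfl
        intro i _
        rw [one_pow, mul_one, mul_pow, ← pow_mul, map_natCast C]
      have hcast : ∀ i ∈ range (m+1),
          coeff n (X ^ i * z ^ (ν*i) * C (m.choose i : ℚ))
            = ((if i ≤ n then m.choose i * i * ((ν*n).choose (n - i)) else 0 : ℕ) : ℚ) / n := by
        intro i _
        rw [show (X ^ i * z ^ (ν*i) * C (m.choose i : ℚ) : PowerSeries ℚ)
            = (m.choose i : ℚ) • (X ^ i * z ^ (ν*i)) from by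
          rw [smul_eq_C_mul]; ring]
        rw [map_smul, smul_eq_mul, coeff_X_pow_mul']
        rcases Nat.eq_zero_or_pos i with hi0 | hi0
        · subst hi0
          simp only [Nat.mul_zero, pow_zero, Nat.le_zero]
          rw [if_pos (Nat.zero_le n), Nat.sub_zero, coeff_one, if_neg (by omega)]
          simp
        · by_cases hin : i ≤ n
          · rw [if_pos hin, if_pos hin]
            rw [IH (n - i) (by omega) (ν*i) (Nat.mul_pos hν hi0)]
            have hsum : ν * (n - i) + ν * i = ν * n := by
              rw [← Nat.mul_add, Nat.sub_add_cancel hin]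
            rw [hsum]
            have hν0 : (ν : ℚ) ≠ 0 := by positivity
            have hn0 : (n : ℚ) ≠ 0 := by positivity
            have hdiv : ((ν:ℚ) * i) / ((ν:ℚ) * n) = (i:ℚ)/n :=
              mul_div_mul_left _ _ hν0
            push_cast [Nat.cast_sub hin]
            rw [show (ν:ℚ) * ((n:ℚ) - i) + (ν:ℚ)*i = (ν:ℚ)*n from by ring, hdiv]
            ring
          · rw [if_neg hin, if_neg hin, mul_zero, Nat.cast_zero, zero_div]
      rw [hzm, map_sum, Finset.sum_congr rfl hcast, ← Finset.sum_div, ← Nat.cast_sum,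
        natsum _ _ _ hn hm]
      -- now: (m * (ν*n + m - 1).choose (n-1) : ℕ) / n = m/(ν*n+m) * C(ν*n+m, n)
      have hfact : (ν*n + m) * ((ν*n + m - 1).choose (n-1)) = (ν*n + m).choose n * n := by
        have := Nat.add_one_mul_choose_eq (ν*n + m - 1) (n-1)
        rw [show ν*n + m - 1 + 1 = ν*n + m from by omega,
          show n - 1 + 1 = n from by omega] at this
        exact this
      have hn0 : (n : ℚ) ≠ 0 := by positivity
      have hd : ((ν*n + m : ℕ) : ℚ) ≠ 0 := by positivity
      have hfq : ((ν*n + m : ℕ) : ℚ) * ((ν*n + m - 1).choose (n-1) : ℚ)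
          = ((ν*n + m).choose n : ℚ) * n := by exact_mod_cast congrArg (Nat.cast (R := ℚ)) hfact
      push_cast
      push_cast at hfq
      field_simp
      nlinarith [hfq]

/-- The j-th coefficient of −(1/12)·log(ν − (ν−1)z(s)) equals
(1/(12j))·Σ_{k=1}^{j} (ν−1)^k C(νj, j−k), where z generates the higher Catalan
numbers.  Since ν − (ν−1)z = 1 + u with u of positive order, the j-th
coefficient of log(1+u) = Σ_{k≥1} (−1)^{k+1} u^k/k equals the j-th coefficient
of the truncation Σ_{k=1}^{j} (−1)^{k+1} u^k/k. -/
theorem genus_one_coefficient (ν : ℕ) (hν : 2 ≤ ν) (z : PowerSeries ℚ)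
    (h0 : constantCoeff z = 1) (heq : X * z ^ ν = z - 1) :
    ∀ j : ℕ, 1 ≤ j →
      coeff j (-(1 / 12 : ℚ) •
          ∑ k ∈ Finset.Icc 1 j, ((-1 : ℚ) ^ (k + 1) / k) •
            ((C (ν : ℚ) - C ((ν : ℚ) - 1) * z) - 1) ^ k) =
        (1 / (12 * j) : ℚ) *
          ∑ k ∈ Finset.Icc 1 j, ((ν : ℚ) - 1) ^ k * ((ν * j).choose (j - k)) := by
  intro j hj
  have hz : z = 1 + X * z ^ ν := by rw [heq]; ring
  have hE : (C (ν : ℚ) - C ((ν : ℚ) - 1) * z) - 1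
      = C ((ν : ℚ) - 1) * (1 - z) := by
    rw [show (C (ν:ℚ)) = C ((ν:ℚ)-1) + 1 from by rw [map_sub, map_one]; ring]
    ring
  have h1z : (1 - z : PowerSeries ℚ) = -(X * z ^ ν) := by rw [heq]; ring
  rw [map_smul, map_sum, smul_eq_mul, Finset.mul_sum, Finset.mul_sum]
  apply Finset.sum_congr rfl
  intro k hk
  obtain ⟨hk1, hkj⟩ := Finset.mem_Icc.mp hk
  have hEk : coeff j (((C (ν : ℚ) - C ((ν : ℚ) - 1) * z) - 1) ^ k)
      = ((ν:ℚ)-1)^k * (-1:ℚ)^k * ((k:ℚ)/(j:ℚ) * ((ν * j).choose (j - k))) := by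
    rw [hE, mul_pow, h1z, neg_pow, mul_pow, ← pow_mul, ← map_pow,
      show ((-1 : PowerSeries ℚ)^k) = C ((-1:ℚ)^k) from by rw [map_pow, map_neg, map_one],
      show (C (((ν:ℚ)-1)^k)) * (C ((-1:ℚ)^k) * (X^k * z^(ν*k)))
        = C (((ν:ℚ)-1)^k * (-1:ℚ)^k) * (X^k * z^(ν*k)) from by rw [map_mul]; ring,
      coeff_C_mul, coeff_X_pow_mul', if_pos hkj,
      fuss ν (by omega) z hz (j-k) (ν*k) (Nat.mul_pos (by omega) hk1),
      show ν*(j-k) + ν*k = ν*j from by rw [← Nat.mul_add, Nat.sub_add_cancel hkj]]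
    have hν0 : (ν : ℚ) ≠ 0 := by positivity
    have hdiv : ((ν:ℚ) * k) / ((ν:ℚ) * j) = (k:ℚ)/j := mul_div_mul_left _ _ hν0
    push_cast [Nat.cast_sub hkj]
    try rw [show (ν:ℚ) * ((j:ℚ) - k) + (ν:ℚ)*k = (ν:ℚ)*j from by ring, hdiv]
    try ring
  rw [map_smul, smul_eq_mul, hEk]
  have hk0 : (k : ℚ) ≠ 0 := by positivity
  have hj0 : (j : ℚ) ≠ 0 := by positivity
  have hsgn : (-1:ℚ)^(k+1) * (-1:ℚ)^k = -1 := by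
    rw [← pow_add]
    exact Odd.neg_one_pow ⟨k, by ring⟩
  rw [show (-1:ℚ)^(k+1)/(k:ℚ) * (((ν:ℚ)-1)^k * (-1:ℚ)^k * ((k:ℚ)/(j:ℚ) * (((ν*j).choose (j-k)):ℚ)))
      = ((-1:ℚ)^(k+1) * (-1:ℚ)^k) * (((ν:ℚ)-1)^k * (((ν*j).choose (j-k)):ℚ) * ((k:ℚ)/k) * (1/(j:ℚ)))
    from by ring, hsgn, div_self hk0]
  field_simp
end

section
/- For integers ν ≥ 2 and j ≥ 2, the identity Σ over pairs (j_1, j_2) of positive integers with j_1+j_2 = j of ζ_{j_1}^{(ν)} ζ_{j_2}^{(ν)} = (2/j)·C(νj, j−2) holds, where ζ_m^{(ν)} = (1/m)·C(νm, m−1). -/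
open Finset PowerSeries

/-- Vandermonde in `range` form. -/
lemma vand' (A M m : ℕ) :
    ∑ u ∈ Finset.range (m + 1), A.choose u * M.choose (m - u) = (A + M).choose m := by
  rw [Nat.add_choose_eq,
    Finset.Nat.sum_antidiagonal_eq_sum_range_succ (fun a b => A.choose a * M.choose b)]

/-- `(u+1)·C(i,u+1) = i·C(i-1,u)`. -/
lemma choose_mul_succ (i u : ℕ) : i.choose (u + 1) * (u + 1) = i * (i - 1).choose u := by
  cases i with
  | zero => simp
  | succ i' =>
    have := Nat.add_one_mul_choose_eq i' u
    simpa [Nat.succ_sub_one, mul_comm] using this.symm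

/-- The key natural-number summation identity. -/
lemma S_eq (i M n : ℕ) (hn : 1 ≤ n) :
    ∑ t ∈ Finset.range (i + 1),
      (if 1 ≤ t ∧ t ≤ n then i.choose t * t * M.choose (n - t) else 0)
      = i * ((i - 1) + M).choose (n - 1) := by
  obtain ⟨m, rfl⟩ : ∃ m, n = m + 1 := ⟨n - 1, by omega⟩
  set f : ℕ → ℕ := fun t => if 1 ≤ t ∧ t ≤ m + 1 then i.choose t * t * M.choose (m + 1 - t) else 0
    with hf
  have hzero : ∀ t, i < t → f t = 0 := by
    intro t ht
    by_cases h : 1 ≤ t ∧ t ≤ m + 1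
    · simp [hf, h, Nat.choose_eq_zero_of_lt ht]
    · simp [hf, h]
  have h1 : ∑ t ∈ Finset.range (i + 1), f t = ∑ t ∈ Finset.range (i + m + 3), f t := by
    refine Finset.sum_subset (Finset.range_subset_range.2 (by omega)) ?_
    intro x _ hx
    exact hzero x (by simp at hx; omega)
  have h2 : ∑ t ∈ Finset.range (m + 2), f t = ∑ t ∈ Finset.range (i + m + 3), f t := by
    refine Finset.sum_subset (Finset.range_subset_range.2 (by omega)) ?_
    intro x hx' hx
    have hxn : m + 1 < x := by simp at hx; omega
    have h : ¬(1 ≤ x ∧ x ≤ m + 1) := by omega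
    simp [hf, h]
  rw [h1, ← h2, Finset.sum_range_succ']
  have hstep : ∀ u ∈ Finset.range (m + 1),
      f (u + 1) = i * ((i - 1).choose u * M.choose (m - u)) := by
    intro u hu
    have hun : u < m + 1 := Finset.mem_range.1 hu
    have hcond : 1 ≤ u + 1 ∧ u + 1 ≤ m + 1 := ⟨Nat.le_add_left 1 u, by omega⟩
    have heq : m + 1 - (u + 1) = m - u := by omega
    rw [hf]
    simp only [hcond, and_self, if_true]
    rw [heq, choose_mul_succ, mul_assoc]
  rw [Finset.sum_congr rfl hstep]
  have hf0 : f 0 = 0 := by simp [hf]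
  rw [hf0, add_zero, ← Finset.mul_sum]
  congr 1
  simpa using vand' (i - 1) M m

/-- The rational coefficients `g n i = (i/(νn+i))·C(νn+i, n)` (with `g 0 i = 1`). -/
noncomputable def gaux (ν n i : ℕ) : ℚ :=
  if n = 0 then 1 else (i : ℚ) * (((ν * n + i).choose n : ℕ) : ℚ) / ((ν * n + i : ℕ) : ℚ)

lemma gaux_zero (ν i : ℕ) : gaux ν 0 i = 1 := by simp [gaux]

lemma gaux_i_zero (ν n : ℕ) (hn : 1 ≤ n) : gaux ν n 0 = 0 := by
  have h : n ≠ 0 := by omega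
  simp [gaux, h]

/-- Cross-multiplication helper for natural casts. -/
lemma nat_div_eq (a b c d : ℕ) (hb : b ≠ 0) (hd : d ≠ 0) (h : a * d = c * b) :
    (a : ℚ) / (b : ℚ) = (c : ℚ) / (d : ℚ) := by
  rw [div_eq_div_iff (by exact_mod_cast hb) (by exact_mod_cast hd)]
  exact_mod_cast h

/-- `g (n-t) (νt) = (t/n)·C(νn, n-t)` for `1 ≤ t ≤ n`. -/
lemma gaux_shift (ν n t : ℕ) (hν : 1 ≤ ν) (hn : 1 ≤ n) (ht1 : 1 ≤ t) (htn : t ≤ n) :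
    gaux ν (n - t) (ν * t) = (t : ℚ) * (((ν * n).choose (n - t) : ℕ) : ℚ) / (n : ℚ) := by
  have hn0 : (n : ℚ) ≠ 0 := by exact_mod_cast (by omega : n ≠ 0)
  have hν0 : (ν : ℚ) ≠ 0 := by exact_mod_cast (by omega : ν ≠ 0)
  by_cases h : n - t = 0
  · have hnt : t = n := by omega
    subst hnt
    rw [gaux, if_pos h, h]
    field_simp
    simp
  · have hsum : ν * (n - t) + ν * t = ν * n := by
      rw [← Nat.mul_add, Nat.sub_add_cancel htn]
    rw [gaux, if_neg h, hsum]
    push_cast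
    field_simp

/-- The Vandermonde-convolution step: `Σ_t C(i,t)·g(n-t)(νt) = g n i`. -/
lemma V_step (ν n i : ℕ) (hν : 1 ≤ ν) (hn : 1 ≤ n) :
    ∑ t ∈ Finset.range (i + 1), ((i.choose t : ℕ) : ℚ) *
      (if t = 0 then 0 else if t ≤ n then gaux ν (n - t) (ν * t) else 0)
      = gaux ν n i := by
  rcases Nat.eq_zero_or_pos i with hi | hi
  · subst hi
    simp [gaux_i_zero ν n hn]
  · have hpoint : ∀ t ∈ Finset.range (i + 1),
        ((i.choose t : ℕ) : ℚ) * (if t = 0 then 0 else if t ≤ n then gaux ν (n - t) (ν * t) else 0)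
        = ((if 1 ≤ t ∧ t ≤ n then i.choose t * t * ((ν * n).choose (n - t)) else 0 : ℕ) : ℚ)
            / (n : ℚ) := by
      intro t _
      by_cases ht0 : t = 0
      · subst ht0; simp
      by_cases htn : t ≤ n
      · have h1t : 1 ≤ t := by omega
        rw [if_neg ht0, if_pos htn, gaux_shift ν n t hν hn h1t htn,
          if_pos (⟨h1t, htn⟩ : 1 ≤ t ∧ t ≤ n)]
        push_cast
        ring
      · rw [if_neg ht0, if_neg htn, if_neg (by omega : ¬(1 ≤ t ∧ t ≤ n))]
        simp
    rw [Finset.sum_congr rfl hpoint, ← Finset.sum_div, ← Nat.cast_sum,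
      S_eq i (ν * n) n hn, gaux, if_neg (by omega : ¬ n = 0)]
    have hkey : (ν * n + i) * ((ν * n + i - 1).choose (n - 1)) = (ν * n + i).choose n * n := by
      have h1 : ν * n + i = (ν * n + i - 1) + 1 := by
        have : 1 ≤ ν * n := Nat.one_le_iff_ne_zero.2 (by positivity)
        omega
      have h2 : n = (n - 1) + 1 := by omega
      calc (ν * n + i) * ((ν * n + i - 1).choose (n - 1))
          = ((ν * n + i - 1) + 1) * ((ν * n + i - 1).choose (n - 1)) := by rw [← h1]
        _ = (ν * n + i - 1 + 1).choose ((n - 1) + 1) * ((n - 1) + 1) :=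
            Nat.add_one_mul_choose_eq _ _
        _ = (ν * n + i).choose n * n := by rw [← h1, ← h2]
    have harg : (i - 1) + ν * n = ν * n + i - 1 := by omega
    have hcross : i * (((i - 1) + ν * n).choose (n - 1)) * (ν * n + i)
        = i * ((ν * n + i).choose n) * n := by
      rw [harg]
      calc i * ((ν * n + i - 1).choose (n - 1)) * (ν * n + i)
          = i * ((ν * n + i) * ((ν * n + i - 1).choose (n - 1))) := by ring
        _ = i * ((ν * n + i).choose n * n) := by rw [hkey]
        _ = i * ((ν * n + i).choose n) * n := by ring
    have hd := nat_div_eq (i * (((i - 1) + ν * n).choose (n - 1))) n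
      (i * ((ν * n + i).choose n)) (ν * n + i) (by omega)
      (by positivity) hcross
    push_cast at hd ⊢
    rw [hd]

/-- Coefficients of powers only depend on lower-order coefficients. -/
lemma coeff_pow_agree {F G : PowerSeries ℚ} {n : ℕ}
    (h : ∀ m ≤ n, PowerSeries.coeff m F = PowerSeries.coeff m G) (i : ℕ) :
    ∀ m ≤ n, PowerSeries.coeff m (F ^ i) = PowerSeries.coeff m (G ^ i) := by
  induction i with
  | zero => intro m _; simp
  | succ i ih =>
    intro m hm
    rw [pow_succ, pow_succ, PowerSeries.coeff_mul, PowerSeries.coeff_mul]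
    apply Finset.sum_congr rfl
    intro p hp
    have hsum := Finset.HasAntidiagonal.mem_antidiagonal.1 hp
    have h1 : p.1 ≤ n := by omega
    have h2 : p.2 ≤ n := by omega
    rw [ih p.1 h1, h p.2 h2]

/-- Master lemma: the coefficients of `F^i` are given by `gaux`. -/
lemma master (ν : ℕ) (hν : 1 ≤ ν) (F : PowerSeries ℚ)
    (hF : ∀ n, PowerSeries.coeff n F = if n = 0 then 1 else gaux ν (n - 1) ν) :
    ∀ n i, PowerSeries.coeff n (F ^ i) = gaux ν n i := by
  intro n
  induction n using Nat.strong_induction_on with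
  | _ n IH =>
    intro i
    rcases Nat.eq_zero_or_pos n with hn | hn
    · subst hn
      rw [PowerSeries.coeff_zero_eq_constantCoeff, map_pow,
        ← PowerSeries.coeff_zero_eq_constantCoeff, hF 0]
      simp [gaux_zero]
    · -- n ≥ 1
      set G : PowerSeries ℚ := PowerSeries.X * F ^ ν + 1 with hG
      have hagree : ∀ m ≤ n, PowerSeries.coeff m F = PowerSeries.coeff m G := by
        intro m hm
        rw [hG, map_add, PowerSeries.coeff_one]
        cases m with
        | zero => rw [PowerSeries.coeff_zero_X_mul, hF 0]; simp
        | succ m' =>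
          rw [PowerSeries.coeff_succ_X_mul, IH m' (by omega) ν, hF (m' + 1)]
          simp
      have h1 : PowerSeries.coeff n (F ^ i) = PowerSeries.coeff n (G ^ i) :=
        coeff_pow_agree hagree i n le_rfl
      rw [h1, hG, add_pow, map_sum]
      have hterm : ∀ t ∈ Finset.range (i + 1),
          PowerSeries.coeff n ((PowerSeries.X * F ^ ν) ^ t * (1 : PowerSeries ℚ) ^ (i - t)
            * ((i.choose t : ℕ) : PowerSeries ℚ))
          = ((i.choose t : ℕ) : ℚ) *
            (if t = 0 then 0 else if t ≤ n then gaux ν (n - t) (ν * t) else 0) := by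
        intro t _
        rw [one_pow, mul_one, mul_pow, ← pow_mul,
          ← map_natCast (PowerSeries.C (R := ℚ)) (i.choose t), PowerSeries.coeff_mul_C,
          PowerSeries.coeff_X_pow_mul']
        by_cases ht0 : t = 0
        · subst ht0
          have hn0 : ¬ n = 0 := by omega
          have hn0' : ¬ n - 0 = 0 := by omega
          simp [PowerSeries.coeff_one, hn0, hn0']
        · by_cases htn : t ≤ n
          · rw [if_pos htn, IH (n - t) (by omega) (ν * t), if_neg ht0, if_pos htn]
            ring
          · rw [if_neg htn, if_neg ht0, if_neg htn]
            simp
      rw [Finset.sum_congr rfl hterm]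
      exact V_step ν n i hν hn

/-- `gaux ν (k-1) ν` equals the closed form of `ζ k`. -/
lemma gaux_nu (ν k : ℕ) (hν : 1 ≤ ν) (hk : 1 ≤ k) :
    gaux ν (k - 1) ν = (1 / (k : ℚ)) * (((ν * k).choose (k - 1) : ℕ) : ℚ) := by
  have hk0 : (k : ℚ) ≠ 0 := by exact_mod_cast (by omega : k ≠ 0)
  have hν0 : (ν : ℚ) ≠ 0 := by exact_mod_cast (by omega : ν ≠ 0)
  rcases Nat.lt_or_ge k 2 with hk2 | hk2
  · have : k = 1 := by omega
    subst this
    simp [gaux_zero]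
  · have hkm : ¬ (k - 1 = 0) := by omega
    have hmul : ν * (k - 1) + ν = ν * k := by
      rw [← Nat.mul_succ]
      congr 1
      omega
    rw [gaux, if_neg hkm, hmul]
    push_cast
    field_simp

/-- For ν ≥ 2 and j ≥ 2: Σ_{j₁+j₂=j, j₁,j₂>0} ζ_{j₁} ζ_{j₂} = (2/j)·C(νj, j−2),
where ζ_m = (1/m)·C(νm, m−1). -/
theorem eta_two_formula (ν j : ℕ) (hν : 2 ≤ ν) (hj : 2 ≤ j)
    (ζ : ℕ → ℚ) (hζ : ∀ m : ℕ, 1 ≤ m → ζ m = (1 / m) * ((ν * m).choose (m - 1))) :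
    ∑ p ∈ (Finset.HasAntidiagonal.antidiagonal j).filter (fun p => 0 < p.1 ∧ 0 < p.2),
        ζ p.1 * ζ p.2 =
      (2 / j : ℚ) * ((ν * j).choose (j - 2)) := by
  have hν1 : 1 ≤ ν := by omega
  set F : PowerSeries ℚ :=
    PowerSeries.mk (fun n => if n = 0 then 1 else gaux ν (n - 1) ν) with hFdef
  have hF : ∀ n, PowerSeries.coeff n F = if n = 0 then 1 else gaux ν (n - 1) ν := by
    intro n; rw [hFdef, PowerSeries.coeff_mk]
  have key := master ν hν1 F hF
  -- coefficients of F - 1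
  have hFm1 : ∀ k : ℕ, PowerSeries.coeff k (F - 1) = if k = 0 then 0 else ζ k := by
    intro k
    rw [map_sub, PowerSeries.coeff_one, hF k]
    by_cases hk : k = 0
    · simp [hk]
    · rw [if_neg hk, if_neg hk, if_neg hk, sub_zero, gaux_nu ν k hν1 (by omega),
        hζ k (by omega)]
  -- the sum is a coefficient of (F-1)*(F-1)
  have hsum : ∑ p ∈ (Finset.HasAntidiagonal.antidiagonal j).filter (fun p => 0 < p.1 ∧ 0 < p.2),
      ζ p.1 * ζ p.2 = PowerSeries.coeff j ((F - 1) * (F - 1)) := by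
    rw [PowerSeries.coeff_mul, Finset.sum_filter]
    apply Finset.sum_congr rfl
    intro p _
    rw [hFm1 p.1, hFm1 p.2]
    by_cases h1 : p.1 = 0
    · simp [h1]
    · by_cases h2 : p.2 = 0
      · simp [h2]
      · rw [if_neg h1, if_neg h2, if_pos ⟨by omega, by omega⟩]
  have hring : (F - 1) * (F - 1) = F ^ 2 - F ^ 1 - F ^ 1 + 1 := by ring
  have hcoeff : PowerSeries.coeff j ((F - 1) * (F - 1))
      = gaux ν j 2 - gaux ν j 1 - gaux ν j 1 := by
    rw [hring, map_add, map_sub, map_sub, key j 2, key j 1, PowerSeries.coeff_one,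
      if_neg (by omega : ¬ j = 0)]
    ring
  rw [hsum, hcoeff]
  -- final arithmetic via Pascal's rule
  have hj0 : (j : ℚ) ≠ 0 := by exact_mod_cast (by omega : j ≠ 0)
  have hjne : ¬ j = 0 := by omega
  have hnj1 : 0 < ν * j := Nat.mul_pos (by omega) (by omega)
  have e2 : gaux ν j 2 = 2 * (((ν * j + 1).choose (j - 1) : ℕ) : ℚ) / (j : ℚ) := by
    rw [gaux, if_neg hjne]
    have hcross : 2 * ((ν * j + 2).choose j) * j
        = 2 * ((ν * j + 1).choose (j - 1)) * (ν * j + 2) := by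
      have h := Nat.add_one_mul_choose_eq (ν * j + 1) (j - 1)
      rw [(by omega : j - 1 + 1 = j), (by omega : ν * j + 1 + 1 = ν * j + 2)] at h
      rw [mul_assoc, ← h]
      ring
    have hd := nat_div_eq (2 * ((ν * j + 2).choose j)) (ν * j + 2)
      (2 * ((ν * j + 1).choose (j - 1))) j (by omega) hjne hcross
    push_cast at hd ⊢
    rw [← hd]
  have e1 : gaux ν j 1 = (((ν * j).choose (j - 1) : ℕ) : ℚ) / (j : ℚ) := by
    rw [gaux, if_neg hjne]
    have hcross : (ν * j + 1).choose j * j = (ν * j).choose (j - 1) * (ν * j + 1) := by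
      have h := Nat.add_one_mul_choose_eq (ν * j) (j - 1)
      rw [(by omega : j - 1 + 1 = j)] at h
      rw [← h]
      ring
    have hd := nat_div_eq ((ν * j + 1).choose j) (ν * j + 1)
      ((ν * j).choose (j - 1)) j (by omega) hjne hcross
    push_cast at hd ⊢
    rw [← hd]
    ring
  have pascal : ((ν * j + 1).choose (j - 1) : ℕ)
      = (ν * j).choose (j - 2) + (ν * j).choose (j - 1) := by
    have h := Nat.choose_succ_succ (ν * j) (j - 2)
    simp only [Nat.succ_eq_add_one] at h
    rw [(by omega : j - 2 + 1 = j - 1)] at h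
    exact h
  rw [e2, e1, pascal]
  push_cast
  field_simp
  ring
end

section
/- For integers ν ≥ 2 and j ≥ 1, the number of sequences of νj steps, each step being +1 or −(ν−1), whose partial sums are all ≥ 0 and whose total sum is 0, equals (1/j)·C(νj, j−1). -/
namespace NonnegWalkAux2

open List

/-- Prefix sum. -/
def ps (l : List ℤ) (t : ℕ) : ℤ := (l.take t).sum

lemma ps_zero (l : List ℤ) : ps l 0 = 0 := rfl

lemma ps_of_length_le (l : List ℤ) {t : ℕ} (h : l.length ≤ t) : ps l t = l.sum := by
  simp [ps, List.take_of_length_le h]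

lemma ps_add (l : List ℤ) (a b : ℕ) :
    ps l (a + b) = ps l a + ((l.drop a).take b).sum := by
  unfold ps
  rw [List.take_drop]
  conv_lhs => rw [← List.take_append_drop a (l.take (a + b))]
  rw [List.sum_append, List.take_take, min_eq_left (Nat.le_add_right a b)]

lemma sum_drop (l : List ℤ) (a : ℕ) : (l.drop a).sum = l.sum - ps l a := by
  have := List.take_append_drop a l
  have h2 : (l.take a).sum + (l.drop a).sum = l.sum := by
    rw [← List.sum_append, this]
  unfold ps; linarith

lemma ps_rotate_low {l : List ℤ} {k i : ℕ} (hk : k ≤ l.length) (hi : i ≤ l.length - k) :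
    ps (l.rotate k) i = ps l (k + i) - ps l k := by
  rw [List.rotate_eq_drop_append_take hk]
  unfold ps
  rw [List.take_append_of_le_length (by simpa using hi)]
  have := ps_add l k i
  unfold ps at this
  linarith

lemma ps_rotate_high {l : List ℤ} {k i : ℕ} (hk : k ≤ l.length)
    (h1 : l.length - k ≤ i) (h2 : i ≤ l.length) :
    ps (l.rotate k) i = l.sum - ps l k + ps l (i - (l.length - k)) := by
  rw [List.rotate_eq_drop_append_take hk]
  unfold ps
  rw [List.take_append, List.take_of_length_le (by simpa using h1),
    List.length_drop, List.sum_append, List.take_take,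
    min_eq_left (by omega)]
  have := sum_drop l k
  unfold ps at this
  linarith

/-- All nonempty prefix sums are at least 1. -/
def Dom (l : List ℤ) : Prop := ∀ i, 1 ≤ i → i ≤ l.length → 1 ≤ ps l i

lemma exists_dom_rotate {l : List ℤ} (hne : l.length ≠ 0) (hsum : l.sum = 1) :
    ∃ k < l.length, Dom (l.rotate k) := by
  set m := l.length with hm
  have hF : ((Finset.range (m + 1)).image (ps l)).Nonempty := by
    simp [Finset.Nonempty, Finset.mem_image]
    exact ⟨0, by omega⟩
  set μ := ((Finset.range (m + 1)).image (ps l)).min' hF with hμ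
  have hmin : ∀ t ≤ m, μ ≤ ps l t := by
    intro t ht
    exact Finset.min'_le _ _ (Finset.mem_image.2 ⟨t, Finset.mem_range.2 (by omega), rfl⟩)
  have hA : ((Finset.range (m + 1)).filter (fun t => ps l t = μ)).Nonempty := by
    obtain ⟨t, ht, hts⟩ := Finset.mem_image.1 (Finset.min'_mem _ hF)
    exact ⟨t, Finset.mem_filter.2 ⟨ht, hts⟩⟩
  set k := ((Finset.range (m + 1)).filter (fun t => ps l t = μ)).max' hA with hk
  have hkmem : k ∈ (Finset.range (m + 1)).filter (fun t => ps l t = μ) :=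
    Finset.max'_mem _ hA
  rw [Finset.mem_filter, Finset.mem_range] at hkmem
  obtain ⟨hklt, hkval⟩ := hkmem
  have hstrict : ∀ t, k < t → t ≤ m → ps l k < ps l t := by
    intro t hkt htm
    rcases lt_or_eq_of_le (hmin t htm) with h | h
    · rw [hkval]; exact h
    · exfalso
      have : t ≤ k := Finset.le_max' _ t
        (Finset.mem_filter.2 ⟨Finset.mem_range.2 (by omega), h.symm⟩)
      omega
  have hμ0 : μ ≤ 0 := by simpa [ps_zero] using hmin 0 (by omega)
  have hkm : k < m := by
    rcases Nat.lt_or_ge k m with h | h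
    · exact h
    · exfalso
      have hkm : k = m := by omega
      have : ps l m = μ := hkm ▸ hkval
      rw [ps_of_length_le l le_rfl, hsum] at this
      omega
  refine ⟨k, hkm, ?_⟩
  intro i hi1 hi2
  rw [List.length_rotate] at hi2
  rcases le_or_gt i (m - k) with h | h
  · rw [ps_rotate_low (by omega) h]
    have := hstrict (k + i) (by omega) (by omega)
    omega
  · rw [ps_rotate_high (by omega) (by omega) hi2, hsum, ← hm]
    have := hmin (i - (m - k)) (by omega)
    omega

lemma dom_rotate_facts {l : List ℤ} (hsum : l.sum = 1) {k : ℕ} (hk : k < l.length)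
    (hd : Dom (l.rotate k)) :
    (∀ t, k < t → t ≤ l.length → ps l k + 1 ≤ ps l t) ∧ (∀ t ≤ k, ps l k ≤ ps l t) := by
  set m := l.length with hm
  have h1 : ∀ t, k < t → t ≤ m → ps l k + 1 ≤ ps l t := by
    intro t hkt htm
    have := hd (t - k) (by omega) (by rw [List.length_rotate]; omega)
    rw [ps_rotate_low (by omega) (by omega)] at this
    have he : k + (t - k) = t := by omega
    rw [he] at this; omega
  refine ⟨h1, ?_⟩
  intro t ht
  rcases Nat.eq_zero_or_pos t with rfl | htpos
  · have := h1 m (by omega) le_rfl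
    rw [ps_of_length_le l le_rfl, hsum] at this
    rw [ps_zero]; omega
  · have := hd (m - k + t) (by omega) (by rw [List.length_rotate]; omega)
    rw [ps_rotate_high (by omega) (by omega) (by omega)] at this
    have he : m - k + t - (m - k) = t := by omega
    rw [he, hsum] at this; omega

lemma dom_rotate_unique {l : List ℤ} (hsum : l.sum = 1) {k1 k2 : ℕ}
    (h1 : k1 < l.length) (h2 : k2 < l.length)
    (d1 : Dom (l.rotate k1)) (d2 : Dom (l.rotate k2)) : k1 = k2 := by
  by_contra hne
  wlog hlt : k1 < k2 generalizing k1 k2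
  · exact this h2 h1 d2 d1 (by omega) (by omega)
  have f1 := (dom_rotate_facts hsum h1 d1).1 k2 hlt (by omega)
  have f2 := (dom_rotate_facts hsum h2 d2).2 k1 (by omega)
  omega


section Main

variable (ν j : ℕ)

def Wset : Set (List ℤ) :=
  {l | l.length = ν * j ∧ (∀ x ∈ l, x = 1 ∨ x = -((ν : ℤ) - 1)) ∧
       (∀ p : List ℤ, p <+: l → 0 ≤ p.sum) ∧ l.sum = 0}

def Pset : Set (List ℤ) :=
  {l | l.length = ν * j + 1 ∧ (∀ x ∈ l, x = 1 ∨ x = -((ν : ℤ) - 1)) ∧ Dom l ∧ l.sum = 1}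

def Sset : Set (List ℤ) :=
  {l | l.length = ν * j + 1 ∧ (∀ x ∈ l, x = 1 ∨ x = -((ν : ℤ) - 1)) ∧ l.sum = 1}

variable {ν j}

lemma card_W_eq_card_P (hν : 2 ≤ ν) :
    Nat.card (Wset ν j) = Nat.card (Pset ν j) := by
  have hc : -((ν : ℤ) - 1) ≤ -1 := by
    have : (2 : ℤ) ≤ (ν : ℤ) := by exact_mod_cast hν
    linarith
  refine Nat.card_eq_of_bijective
    (fun l => ⟨(1 : ℤ) :: l.1, ?_⟩) ⟨?_, ?_⟩
  · obtain ⟨hlen, hok, hpre, hsum⟩ := l.2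
    refine ⟨by simp [hlen], ?_, ?_, by simp [hsum]⟩
    · intro x hx
      rcases List.mem_cons.1 hx with rfl | hx
      · exact Or.inl rfl
      · exact hok x hx
    · intro i hi1 hi2
      obtain ⟨i', rfl⟩ : ∃ i', i = i' + 1 := ⟨i - 1, by omega⟩
      have h0 : 0 ≤ ps l.1 i' := hpre _ (List.take_prefix i' l.1)
      have : ps (1 :: l.1) (i' + 1) = 1 + ps l.1 i' := by
        simp [ps, List.take_succ_cons]
      omega
  · intro l1 l2 h
    apply Subtype.ext
    have := Subtype.ext_iff.1 h
    simpa using this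
  · rintro ⟨p, hp⟩
    obtain ⟨hlen, hok, hdom, hsum⟩ := hp
    rcases p with _ | ⟨a, t⟩
    · simp at hlen
    have hps1 : ps (a :: t) 1 = a := by simp [ps]
    have ha1 : 1 ≤ a := by
      have := hdom 1 le_rfl (by simp)
      rwa [hps1] at this
    have ha : a = 1 := by
      rcases hok a List.mem_cons_self with h | h
      · exact h
      · omega
    subst ha
    have htlen : t.length = ν * j := by simpa using hlen
    have htsum : t.sum = 0 := by
      have : (1 : ℤ) + t.sum = 1 := by simpa using hsum
      linarith
    refine ⟨⟨t, htlen, fun x hx => hok x (List.mem_cons_of_mem _ hx), ?_, htsum⟩, rfl⟩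
    intro q hq
    have hqt : q = t.take q.length := List.prefix_iff_eq_take.1 hq
    have hql : q.length ≤ t.length := hq.length_le
    have hd := hdom (q.length + 1) (by omega) (by simp; omega)
    have heq : ps (1 :: t) (q.length + 1) = 1 + (t.take q.length).sum := by
      rw [ps, List.take_succ_cons, List.sum_cons]
    have hq' : q.sum = (t.take q.length).sum := by conv_lhs => rw [hqt]
    rw [heq] at hd
    linarith

lemma rotate_mod' (l : List ℤ) {m : ℕ} (h : l.length = m) (x : ℕ) :
    l.rotate (x % m) = l.rotate x := by
  subst h; exact List.rotate_mod l x

lemma card_S_eq (hν : 2 ≤ ν) :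
    Nat.card (Sset ν j) = Nat.card (Pset ν j) * (ν * j + 1) := by
  classical
  set m := ν * j + 1 with hm
  have hmpos : 0 < m := by omega
  have hg : Function.Bijective
      (fun x : (Pset ν j) × Fin m => (⟨x.1.1.rotate x.2.1, by
        obtain ⟨hlen, hok, hdom, hsum⟩ := x.1.2
        refine ⟨by simpa using hlen, ?_, ?_⟩
        · intro y hy; exact hok y (List.mem_rotate.1 hy)
        · rw [(List.rotate_perm x.1.1 x.2.1).sum_eq]; exact hsum⟩ : Sset ν j)) := by
    constructor
    · rintro ⟨⟨p1, hp1⟩, ⟨k1, hk1⟩⟩ ⟨⟨p2, hp2⟩, ⟨k2, hk2⟩⟩ h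
      simp only [Subtype.mk.injEq] at h
      obtain ⟨hl1, hok1, hdom1, hs1⟩ := hp1
      obtain ⟨hl2, hok2, hdom2, hs2⟩ := hp2
      have hl1m : p1.length = m := hl1
      have hl2m : p2.length = m := hl2
      have he2 : p2 = p1.rotate (k1 + (m - k2)) := by
        have h2 : (p2.rotate k2).rotate (m - k2) = p2 := by
          rw [List.rotate_rotate, show k2 + (m - k2) = m by omega, ← hl2m,
            List.rotate_length]
        rw [← h2, ← h, List.rotate_rotate]
      have he : p1.rotate ((k1 + (m - k2)) % m) = p2 :=
        (rotate_mod' p1 hl1m _).trans he2.symm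
      have hd0 : Dom (p1.rotate 0) := by rwa [List.rotate_zero]
      have hd2 : Dom (p1.rotate ((k1 + (m - k2)) % m)) := he ▸ hdom2
      have he0 : (0 : ℕ) = (k1 + (m - k2)) % m :=
        dom_rotate_unique hs1 (by omega) (by rw [hl1m]; exact Nat.mod_lt _ hmpos) hd0 hd2
      have hdvd : m ∣ k1 + (m - k2) := Nat.dvd_of_mod_eq_zero he0.symm
      obtain ⟨c, hc⟩ := hdvd
      have hval : k1 + (m - k2) = m := by
        rcases c with _ | _ | c
        · rw [Nat.mul_zero] at hc; omega
        · rw [Nat.mul_one] at hc; omega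
        · have h2 : m * 2 ≤ m * (c + 2) := Nat.mul_le_mul_left m (by omega)
          rw [← hc] at h2
          omega
      have hk12 : k1 = k2 := by omega
      have hp12 : p1 = p2 := by
        have hz : (k1 + (m - k2)) % m = 0 := by rw [hval]; exact Nat.mod_self m
        rw [hz, List.rotate_zero] at he
        exact he
      simp only [Prod.mk.injEq, Subtype.mk.injEq, Fin.mk.injEq]
      exact ⟨Subtype.ext hp12, by simp [hk12]⟩
    · rintro ⟨l, hl⟩
      obtain ⟨hlen, hok, hsum⟩ := hl
      obtain ⟨k, hk, hdom⟩ := exists_dom_rotate (by omega) hsum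
      rw [hlen] at hk
      have hplen : (l.rotate k).length = m := by simpa using hlen
      refine ⟨⟨⟨l.rotate k, hplen, ?_, hdom, ?_⟩, ⟨(m - k) % m, Nat.mod_lt _ hmpos⟩⟩, ?_⟩
      · intro y hy; exact hok y (List.mem_rotate.1 hy)
      · rw [(List.rotate_perm l k).sum_eq]; exact hsum
      · apply Subtype.ext
        show (l.rotate k).rotate ((m - k) % m) = l
        have hlenm : l.length = m := hlen
        rw [rotate_mod' _ hplen, List.rotate_rotate,
          show k + (m - k) = m from by omega, ← hlenm, List.rotate_length]
  calc Nat.card (Sset ν j) = Nat.card ((Pset ν j) × Fin m) :=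
        (Nat.card_eq_of_bijective _ hg).symm
    _ = Nat.card (Pset ν j) * m := by
        rw [Nat.card_prod]
        congr 1
        rw [Nat.card_eq_fintype_card, Fintype.card_fin]

lemma sum_ofFn_if (m : ℕ) (s : Finset (Fin m)) (c : ℤ) :
    (List.ofFn (fun i => if i ∈ s then c else 1)).sum = m + s.card * (c - 1) := by
  rw [List.sum_ofFn]
  have : ∀ i : Fin m, (if i ∈ s then c else 1) = (if i ∈ s then c - 1 else 0) + 1 := by
    intro i; by_cases h : i ∈ s <;> simp [h]
  rw [Finset.sum_congr rfl (fun i _ => this i), Finset.sum_add_distrib,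
    Finset.sum_const, Finset.sum_ite_mem, Finset.univ_inter, Finset.sum_const,
    Finset.card_univ, Fintype.card_fin]
  push_cast
  ring

lemma card_S_choose (hν : 2 ≤ ν) :
    Nat.card (Sset ν j) = (ν * j + 1).choose j := by
  classical
  set m := ν * j + 1 with hm
  set c : ℤ := -((ν : ℤ) - 1) with hc
  have hcne : c ≠ 1 := by
    have : (2 : ℤ) ≤ (ν : ℤ) := by exact_mod_cast hν
    simp only [hc]; intro h; linarith
  have hΦ : Function.Bijective
      (fun s : {s : Finset (Fin m) // s.card = j} =>
        (⟨List.ofFn (fun i => if i ∈ s.1 then c else 1), by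
          refine ⟨by simp, ?_, ?_⟩
          · intro x hx
            rw [List.mem_ofFn] at hx
            obtain ⟨i, hi⟩ := hx
            by_cases h : i ∈ s.1 <;> simp [h] at hi <;> [exact Or.inr hi.symm;
              exact Or.inl hi.symm]
          · rw [sum_ofFn_if, s.2]
            have : c - 1 = -(ν : ℤ) := by rw [hc]; ring
            rw [this, hm]
            push_cast
            ring⟩ : Sset ν j)) := by
    constructor
    · intro s1 s2 h
      have hv : (List.ofFn fun i => if i ∈ s1.1 then c else 1)
          = (List.ofFn fun i => if i ∈ s2.1 then c else 1) := Subtype.ext_iff.1 h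
      have hf := List.ofFn_injective hv
      apply Subtype.ext
      ext i
      have := congrFun hf i
      by_cases h1 : i ∈ s1.1 <;> by_cases h2 : i ∈ s2.1 <;>
        simp [h1, h2] at this ⊢
      · exact hcne this
      · exact hcne this.symm
    · rintro ⟨l, hlen, hok, hsum⟩
      set s : Finset (Fin m) :=
        Finset.univ.filter (fun i : Fin m => ¬ l[(i : ℕ)]'(by omega) = 1) with hs
      have hl2 : l = List.ofFn (fun i => if i ∈ s then c else 1) := by
        apply List.ext_getElem (by simp [hlen])
        intro n h1 h2
        rw [List.getElem_ofFn]
        by_cases hn : l[n] = 1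
        · have : (⟨n, by simp at h2; omega⟩ : Fin m) ∉ s := by
            simp [hs]
            exact hn
          simp [this, hn]
        · have hmem : (⟨n, by simp at h2; omega⟩ : Fin m) ∈ s := by
            simp [hs]
            exact hn
          rcases hok l[n] (List.getElem_mem h1) with h | h
          · exact absurd h hn
          · rw [if_pos hmem, hc]
            exact h
      have hcard : s.card = j := by
        have h1 : (List.ofFn (fun i => if i ∈ s then c else 1)).sum = 1 := by
          rw [← hl2]; exact hsum
        rw [sum_ofFn_if] at h1
        have hcm : c - 1 = -(ν : ℤ) := by rw [hc]; ring
        rw [hcm] at h1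
        have : (ν : ℤ) * s.card = (ν : ℤ) * j := by push_cast at h1 ⊢; linarith
        have hn : ν * s.card = ν * j := by exact_mod_cast this
        exact Nat.eq_of_mul_eq_mul_left (by omega) hn
      exact ⟨⟨s, hcard⟩, Subtype.ext hl2.symm⟩
  rw [← Nat.card_eq_of_bijective _ hΦ, Nat.card_eq_fintype_card,
    Fintype.card_finset_len, Fintype.card_fin]

end Main

end NonnegWalkAux2

open NonnegWalkAux2

/-- The number of sequences of νj steps, each +1 or −(ν−1), with all partial
sums ≥ 0 and total sum 0, equals (1/j)·C(νj, j−1). -/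
theorem nonneg_walk_count (ν j : ℕ) (hν : 2 ≤ ν) (hj : 1 ≤ j) :
    ({l : List ℤ |
        l.length = ν * j ∧
        (∀ x ∈ l, x = 1 ∨ x = -((ν : ℤ) - 1)) ∧
        (∀ p : List ℤ, p <+: l → 0 ≤ p.sum) ∧
        l.sum = 0}.ncard : ℚ) =
      (1 / j : ℚ) * ((ν * j).choose (j - 1)) := by
  have hset : {l : List ℤ |
        l.length = ν * j ∧
        (∀ x ∈ l, x = 1 ∨ x = -((ν : ℤ) - 1)) ∧
        (∀ p : List ℤ, p <+: l → 0 ≤ p.sum) ∧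
        l.sum = 0} = Wset ν j := rfl
  rw [hset]
  set x := (Wset ν j).ncard with hx
  have h1 : x = Nat.card (Wset ν j) := (Nat.card_coe_set_eq _).symm
  have hmain : x * (ν * j + 1) = (ν * j + 1).choose j := by
    rw [h1, card_W_eq_card_P hν, ← card_S_eq hν, card_S_choose hν]
  have hid : (ν * j + 1) * (ν * j).choose (j - 1) = (ν * j + 1).choose j * j := by
    have h := Nat.add_one_mul_choose_eq (ν * j) (j - 1)
    simp only [Nat.succ_eq_add_one, Nat.sub_add_cancel hj] at h
    exact h
  have hxj : x * j = (ν * j).choose (j - 1) := by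
    apply Nat.eq_of_mul_eq_mul_left (show 0 < ν * j + 1 by omega)
    calc (ν * j + 1) * (x * j) = (x * (ν * j + 1)) * j := by ring
      _ = (ν * j + 1).choose j * j := by rw [hmain]
      _ = (ν * j + 1) * (ν * j).choose (j - 1) := hid.symm
  have hjQ : (j : ℚ) ≠ 0 := Nat.cast_ne_zero.2 (by omega)
  have hq : (x : ℚ) * j = ((ν * j).choose (j - 1) : ℚ) := by exact_mod_cast hxj
  field_simp
  linarith
end
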